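/- arXiv:2411.16418 — 3 statements merged into one kernel-verified Lean document; each statement's English description precedes it below -/
import Mathlib

section
/- Let k≥0 be an integer, α∈(0,1), Ω⊂ℝ^n a bounded domain with C¹ boundary, and ρ a C¹(Ω̄) defining function of Ω. If u ∈ C^{k,α}(Ω̄)∩C^{k+2,α}(Ω) is such that, for i=1,2, the function ρ^i∇^{k+i}u on Ω extends to a C^α function on Ω̄, then these extensions vanish on ∂Ω; that is, ρ∇^{k+1}u → 0 and ρ²∇^{k+2}u → 0 at every boundary point. -/
open Set Filter Topology

noncomputable section

abbrev En (n : ℕ) : Type := EuclideanSpace ℝ (Fin n)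

variable {n : ℕ}

/-- The partial derivative `∂ᵢ w` (computed with the full-space derivative). -/
noncomputable def pd (i : Fin n) (w : En n → ℝ) (x : En n) : ℝ :=
  fderiv ℝ w x (EuclideanSpace.single i 1)

/-- Iterated partial derivatives along a list of coordinate directions. -/
noncomputable def pdAll : List (Fin n) → (En n → ℝ) → En n → ℝ
  | [], w => w
  | i :: l, w => pd i (pdAll l w)

/-- Second-order partial derivative `∂ᵢ∂ⱼ w`. -/
noncomputable def pd2 (i j : Fin n) (w : En n → ℝ) : En n → ℝ := pd i (pd j w)

/-- The sup norm `|w|_{L^∞(E)}`. -/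
noncomputable def supNorm (E : Set (En n)) (w : En n → ℝ) : ℝ :=
  sSup ((fun x => |w x|) '' E)

/-- The Hölder seminorm `[w]_{C^β(E)}`. -/
noncomputable def holderSemi (β : ℝ) (E : Set (En n)) (w : En n → ℝ) : ℝ :=
  sSup ((fun p : En n × En n => |w p.1 - w p.2| / dist p.1 p.2 ^ β) '' (E ×ˢ E))

/-- The Hölder norm `|w|_{C^β(E)} = |w|_{L^∞(E)} + [w]_{C^β(E)}`. -/
noncomputable def holderNorm (β : ℝ) (E : Set (En n)) (w : En n → ℝ) : ℝ :=
  supNorm E w + holderSemi β E w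

/-- `w` is `β`-Hölder continuous on `E`. -/
def IsHolderOn (β : ℝ) (E : Set (En n)) (w : En n → ℝ) : Prop :=
  ∃ C : ℝ, ∀ x ∈ E, ∀ y ∈ E, |w x - w y| ≤ C * dist x y ^ β

/-- `w` is bounded on `E`. -/
def BoundedOn (E : Set (En n)) (w : En n → ℝ) : Prop :=
  ∃ M : ℝ, ∀ x ∈ E, |w x| ≤ M

/-- `w ∈ C^{k,β}(Ē)`: `w` is `C^k` in the open set `Ω`, all derivatives of order `≤ k`
extend continuously to the closure, and the order-`k` derivatives are `β`-Hölder. -/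
def MemHolderBar (k : ℕ) (β : ℝ) (Ω : Set (En n)) (w : En n → ℝ) : Prop :=
  ContinuousOn w (closure Ω) ∧ ContDiffOn ℝ k w Ω ∧
  (∀ l : List (Fin n), l.length ≤ k →
    ∃ g : En n → ℝ, ContinuousOn g (closure Ω) ∧ EqOn (pdAll l w) g Ω) ∧
  (∀ l : List (Fin n), l.length = k → IsHolderOn β Ω (pdAll l w))

/-- `w ∈ C^{k,β}(Ω)`: the interior Hölder class (Hölder on compact subsets). -/
def MemHolderLoc (k : ℕ) (β : ℝ) (Ω : Set (En n)) (w : En n → ℝ) : Prop :=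
  ContDiffOn ℝ k w Ω ∧
  ∀ K : Set (En n), K ⊆ Ω → IsCompact K →
    ∀ l : List (Fin n), l.length = k → IsHolderOn β K (pdAll l w)

/-- The norm `|w|_{C^{k,β}(Ē)}`. -/
noncomputable def holderNormCk (k : ℕ) (β : ℝ) (Ω : Set (En n)) (w : En n → ℝ) : ℝ :=
  (∑ i ∈ Finset.range (k + 1), ∑ v : Fin i → Fin n, supNorm Ω (pdAll (List.ofFn v) w)) +
  ∑ v : Fin k → Fin n, holderSemi β Ω (pdAll (List.ofFn v) w)

/-- The uniformly degenerate operator `L = ρ² a_{ij}∂_{ij} + ρ b_i ∂_i + c`. -/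
noncomputable def Lop (ρ : En n → ℝ) (a : Fin n → Fin n → En n → ℝ)
    (b : Fin n → En n → ℝ) (c : En n → ℝ) (w : En n → ℝ) (x : En n) : ℝ :=
  (ρ x) ^ 2 * ∑ i, ∑ j, a i j x * pd2 i j w x
    + ρ x * ∑ i, b i x * pd i w x + c x * w x

/-- Symmetry and uniform ellipticity `λ|ξ|² ≤ a_{ij}ξ_iξ_j ≤ Λ|ξ|²` on `E`. -/
def Elliptic (E : Set (En n)) (a : Fin n → Fin n → En n → ℝ) (lam Lam : ℝ) : Prop :=
  (∀ i j, ∀ x : En n, a i j x = a j i x) ∧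
  ∀ x ∈ E, ∀ ξ : Fin n → ℝ,
    lam * (∑ i, ξ i ^ 2) ≤ (∑ i, ∑ j, a i j x * ξ i * ξ j) ∧
    (∑ i, ∑ j, a i j x * ξ i * ξ j) ≤ Lam * (∑ i, ξ i ^ 2)

/-- The characteristic polynomial `P(μ) = μ(μ-1)a_{ij}ν_iν_j + μ b_iν_i + c`,
expressed through a function `ν` recording the boundary values of `∇ρ`. -/
def Pchar (a : Fin n → Fin n → En n → ℝ) (b : Fin n → En n → ℝ) (c : En n → ℝ)
    (ν : En n → Fin n → ℝ) (μ : ℝ) (x : En n) : ℝ :=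
  μ * (μ - 1) * (∑ i, ∑ j, a i j x * ν x i * ν x j) + μ * (∑ i, b i x * ν x i) + c x

/-- `ρ` is a defining function for `Ω`, with `ν` the continuous extension of `∇ρ`
to the closure, of unit length on the boundary. -/
def DefiningFn (Ω : Set (En n)) (ρ : En n → ℝ) (ν : En n → Fin n → ℝ) : Prop :=
  (∀ x ∈ Ω, 0 < ρ x) ∧ (∀ x ∈ frontier Ω, ρ x = 0) ∧
  ContinuousOn ρ (closure Ω) ∧ ContDiffOn ℝ 1 ρ Ω ∧
  (∀ i, ContinuousOn (fun x => ν x i) (closure Ω)) ∧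
  (∀ x ∈ Ω, ∀ i, ν x i = pd i ρ x) ∧
  (∀ x ∈ frontier Ω, (∑ i, (ν x i) ^ 2) = 1)

end

open Set Filter Topology

section Aux

open Metric

variable {n : ℕ}

lemma pdAll_cons (i : Fin n) (l : List (Fin n)) (w : En n → ℝ) :
    pdAll (i :: l) w = pd i (pdAll l w) := rfl

lemma euclid_abs_le_norm (ξ : En n) (i : Fin n) : |ξ i| ≤ ‖ξ‖ := by
  have h := abs_real_inner_le_norm (EuclideanSpace.single i (1:ℝ)) ξ
  rw [EuclideanSpace.inner_single_left] at h
  simpa [EuclideanSpace.norm_single] using h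

lemma pdAll_contDiffOn {Ω : Set (En n)} (hΩ : IsOpen Ω) {w : En n → ℝ}
    (l : List (Fin n)) (m : ℕ) (h : ContDiffOn ℝ (m + l.length : ℕ) w Ω) :
    ContDiffOn ℝ m (pdAll l w) Ω := by
  induction l generalizing m with
  | nil => simpa [pdAll] using h
  | cons i l ih =>
    have h1 : ContDiffOn ℝ (m + 1 : ℕ) (pdAll l w) Ω := by
      apply ih (m + 1)
      convert h using 2
      simp [List.length_cons]
      omega
    have h2 : ContDiffOn ℝ m (fderiv ℝ (pdAll l w)) Ω :=
      h1.fderiv_of_isOpen hΩ (by norm_cast)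
    exact (ContinuousLinearMap.apply ℝ ℝ
      (EuclideanSpace.single i 1)).contDiff.comp_contDiffOn h2

lemma opNorm_le_sum_abs_pd (w : En n → ℝ) (p : En n) :
    ‖fderiv ℝ w p‖ ≤ ∑ i, |pd i w p| := by
  apply ContinuousLinearMap.opNorm_le_bound _ (by positivity)
  intro ξ
  have hξ : ξ = ∑ i, ξ i • EuclideanSpace.single i (1:ℝ) := by
    have h := (EuclideanSpace.basisFun (Fin n) ℝ).sum_repr ξ
    simp only [EuclideanSpace.basisFun_repr, EuclideanSpace.basisFun_apply] at h
    exact h.symm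
  calc ‖fderiv ℝ w p ξ‖ = |∑ i, ξ i * pd i w p| := by
        conv_lhs => rw [hξ]
        rw [map_sum]
        simp [pd, Real.norm_eq_abs]
    _ ≤ ∑ i, |ξ i * pd i w p| := Finset.abs_sum_le_sum_abs _ _
    _ ≤ ∑ i, |pd i w p| * ‖ξ‖ := by
        apply Finset.sum_le_sum
        intro i _
        rw [abs_mul, mul_comm]
        exact mul_le_mul_of_nonneg_left (euclid_abs_le_norm ξ i) (abs_nonneg _)
    _ = (∑ i, |pd i w p|) * ‖ξ‖ := by rw [Finset.sum_mul]

lemma rho_le_infDist {Ω : Set (En n)} (hΩo : IsOpen Ω) {ρ : En n → ℝ} {M : ℝ}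
    (hρc : ContinuousOn ρ (closure Ω)) (hρd : ContDiffOn ℝ 1 ρ Ω)
    (hfr : ∀ x ∈ frontier Ω, ρ x = 0)
    (hM : ∀ p ∈ Ω, ‖fderiv ℝ ρ p‖ ≤ M)
    (hne : Ωᶜ.Nonempty) :
    ∀ x ∈ Ω, ρ x ≤ M * Metric.infDist x Ωᶜ := by
  intro x hx
  have hM0 : 0 ≤ M := le_trans (norm_nonneg _) (hM x hx)
  obtain ⟨z, hz, hzd⟩ := (hΩo.isClosed_compl).exists_infDist_eq_dist hne x
  set r := Metric.infDist x Ωᶜ with hr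
  have hrpos : 0 < r :=
    (hΩo.isClosed_compl.notMem_iff_infDist_pos hne).1 (by simpa using hx)
  set y : ℝ → En n := fun t => x + t • (z - x) with hy
  have hnorm : ‖z - x‖ = r := by
    rw [hzd, dist_eq_norm, norm_sub_rev]
  have hymem : ∀ t ∈ Ico (0:ℝ) 1, y t ∈ Ω := by
    intro t ht
    apply Metric.ball_infDist_compl_subset (x := x)
    rw [Metric.mem_ball, dist_eq_norm]
    have he : y t - x = t • (z - x) := by simp [hy]
    rw [he, norm_smul, Real.norm_eq_abs, abs_of_nonneg ht.1, hnorm]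
    calc t * r < 1 * r := by
          exact mul_lt_mul_of_pos_right ht.2 hrpos
      _ = r := one_mul r
  have key : ∀ t ∈ Ico (0:ℝ) 1, ρ x ≤ ρ (y t) + M * r := by
    intro t ht
    have hseg : segment ℝ x (y t) ⊆ Ω := by
      rw [segment_eq_image']
      rintro p ⟨θ, hθ, rfl⟩
      show x + θ • (y t - x) ∈ Ω
      have heq : x + θ • (y t - x) = y (θ * t) := by
        simp only [hy, add_sub_cancel_left, smul_smul]
      rw [heq]
      refine hymem _ ⟨mul_nonneg hθ.1 ht.1, ?_⟩
      calc θ * t ≤ 1 * t := mul_le_mul_of_nonneg_right hθ.2 ht.1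
        _ = t := one_mul t
        _ < 1 := ht.2
    have hmvt := (convex_segment x (y t)).norm_image_sub_le_of_norm_fderiv_le
      (f := ρ) (C := M)
      (fun p hp => ((hρd.contDiffAt (hΩo.mem_nhds (hseg hp))).differentiableAt one_ne_zero))
      (fun p hp => hM p (hseg hp)) (left_mem_segment ℝ x (y t)) (right_mem_segment ℝ x (y t))
    have hyd : ‖y t - x‖ ≤ r := by
      have he : y t - x = t • (z - x) := by simp [hy]
      rw [he, norm_smul, Real.norm_eq_abs, abs_of_nonneg ht.1, hnorm]
      calc t * r ≤ 1 * r := mul_le_mul_of_nonneg_right ht.2.le hrpos.le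
        _ = r := one_mul r
    have h1 : ρ x - ρ (y t) ≤ M * r := by
      have := le_trans (le_abs_self _) (le_trans (by rw [abs_sub_comm]; exact le_of_eq rfl) (le_trans hmvt (mul_le_mul_of_nonneg_left hyd hM0)))
      linarith [this]
    linarith
  -- limits
  haveI hFne : (𝓝[Ico (0:ℝ) 1] 1).NeBot := by
    apply mem_closure_iff_nhdsWithin_neBot.mp
    rw [closure_Ico (by norm_num : (0:ℝ) ≠ 1)]
    exact ⟨by norm_num, le_rfl⟩
  have hycont : Continuous y := continuous_const.add (continuous_id.smul continuous_const)
  have hy1 : y 1 = z := by simp [hy]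
  have hcy : Tendsto y (𝓝[Ico (0:ℝ) 1] 1) (𝓝 z) := by
    have := hycont.tendsto 1
    rw [hy1] at this
    exact this.mono_left nhdsWithin_le_nhds
  have hyΩ : ∀ᶠ t in 𝓝[Ico (0:ℝ) 1] 1, y t ∈ Ω :=
    eventually_mem_nhdsWithin.mono fun t ht => hymem t ht
  have hzcl : z ∈ closure Ω := mem_closure_of_tendsto hcy hyΩ
  have hzfr : z ∈ frontier Ω := by
    rw [frontier_eq_closure_inter_closure]
    exact ⟨hzcl, subset_closure hz⟩
  have hρz : ρ z = 0 := hfr z hzfr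
  have hcyc : Tendsto y (𝓝[Ico (0:ℝ) 1] 1) (𝓝[closure Ω] z) :=
    tendsto_nhdsWithin_iff.mpr ⟨hcy, hyΩ.mono fun t ht => subset_closure ht⟩
  have hlim : Tendsto (fun t => ρ (y t)) (𝓝[Ico (0:ℝ) 1] 1) (𝓝 0) := by
    have := (hρc z hzcl).tendsto.comp hcyc
    rwa [hρz] at this
  have hfin : ρ x - M * r ≤ 0 :=
    ge_of_tendsto hlim (eventually_mem_nhdsWithin.mono fun t ht => by linarith [key t ht])
  linarith

lemma core {n : ℕ} {Ω : Set (En n)} (hΩo : IsOpen Ω) {ρ : En n → ℝ} {M : ℝ} (hMpos : 0 < M)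
    (hρpos : ∀ x ∈ Ω, 0 < ρ x) (hρle : ∀ x ∈ Ω, ρ x ≤ M * Metric.infDist x Ωᶜ)
    {g : En n → ℝ} (hgdiff : ∀ x ∈ Ω, DifferentiableAt ℝ g x)
    {x₀ : En n} (hx₀ : x₀ ∈ frontier Ω) {L : ℝ} (hglim : Tendsto g (𝓝[Ω] x₀) (𝓝 L))
    {i : Fin n} {ε δ : ℝ} (hε : 0 < ε) (hδ : 0 < δ)
    (hfreq : ∃ᶠ x in 𝓝[Ω] x₀, ∀ y ∈ Ω, dist y x ≤ δ → ε ≤ ρ y * pd i g y) : False := by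
  have hx₀c : x₀ ∈ Ωᶜ := by
    intro h
    exact (hΩo.frontier_eq ▸ hx₀).2 h
  obtain ⟨η, hηpos, hηg⟩ := (tendsto_nhdsWithin_nhds.mp hglim) (ε / (16 * M)) (by positivity)
  have hev : ∀ᶠ x in 𝓝[Ω] x₀, (x ∈ Ω ∧ dist x x₀ < min (η / 2) δ) := by
    have h1 : ∀ᶠ x in 𝓝[Ω] x₀, dist x x₀ < min (η / 2) δ := by
      apply eventually_nhdsWithin_of_eventually_nhds
      have : Metric.ball x₀ (min (η / 2) δ) ∈ 𝓝 x₀ :=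
        Metric.ball_mem_nhds x₀ (by positivity)
      filter_upwards [this] with a ha using Metric.mem_ball.mp ha
    exact eventually_mem_nhdsWithin.and h1
  obtain ⟨x, hxP, hxΩ, hxd⟩ := (hfreq.and_eventually hev).exists
  set r := Metric.infDist x Ωᶜ with hrdef
  have hrpos : 0 < r :=
    (hΩo.isClosed_compl.notMem_iff_infDist_pos ⟨x₀, hx₀c⟩).1 (by simpa using hxΩ)
  have hrle : r ≤ dist x x₀ := Metric.infDist_le_dist_of_mem hx₀c
  set e : En n := EuclideanSpace.single i (1:ℝ) with he
  have hne : ‖e‖ = 1 := by simp [he, EuclideanSpace.norm_single]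
  set y : ℝ → En n := fun t => x + t • e with hy
  have hyd : ∀ t : ℝ, 0 ≤ t → dist (y t) x = t := by
    intro t ht
    rw [dist_eq_norm]
    have : y t - x = t • e := by simp [hy]
    rw [this, norm_smul, Real.norm_eq_abs, abs_of_nonneg ht, hne, mul_one]
  have hymem : ∀ t ∈ Icc (0:ℝ) (r / 2), y t ∈ Ω := by
    intro t ht
    apply Metric.ball_infDist_compl_subset (x := x)
    rw [Metric.mem_ball, hyd t ht.1]
    linarith [ht.2]
  have hwlow : ∀ t ∈ Icc (0:ℝ) (r / 2), ε ≤ ρ (y t) * pd i g (y t) := by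
    intro t ht
    apply hxP _ (hymem t ht)
    rw [hyd t ht.1]
    have : r < δ := lt_of_le_of_lt hrle (lt_of_lt_of_le hxd (min_le_right _ _))
    linarith [ht.2]
  have hρub : ∀ t ∈ Icc (0:ℝ) (r / 2), ρ (y t) ≤ 2 * M * r := by
    intro t ht
    calc ρ (y t) ≤ M * Metric.infDist (y t) Ωᶜ := hρle _ (hymem t ht)
      _ ≤ M * (r + t) := by
          apply mul_le_mul_of_nonneg_left _ hMpos.le
          calc Metric.infDist (y t) Ωᶜ ≤ Metric.infDist x Ωᶜ + dist (y t) x :=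
                Metric.infDist_le_infDist_add_dist
            _ = r + t := by rw [hyd t ht.1]
      _ ≤ 2 * M * r := by nlinarith [ht.2, hMpos]
  set c : ℝ := ε / (2 * M * r) with hcdef
  have hcpos : 0 < c := by positivity
  have hc : ∀ t ∈ Icc (0:ℝ) (r / 2), c ≤ pd i g (y t) := by
    intro t ht
    have h0 : 0 < ρ (y t) := hρpos _ (hymem t ht)
    have h1 : ε / ρ (y t) ≤ pd i g (y t) := by
      rw [div_le_iff₀ h0]
      linarith [hwlow t ht, mul_comm (pd i g (y t)) (ρ (y t))]
    have h2 : c ≤ ε / ρ (y t) := by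
      rw [hcdef]
      exact div_le_div_of_nonneg_left hε.le h0 (hρub t ht)
    linarith
  have hder : ∀ t ∈ Icc (0:ℝ) (r / 2), HasDerivAt (fun τ => g (y τ)) (pd i g (y t)) t := by
    intro t ht
    have hline : HasDerivAt (fun τ : ℝ => x + τ • e) e t := by
      simpa using (((hasDerivAt_id t).smul_const e).const_add x)
    have := ((hgdiff _ (hymem t ht)).hasFDerivAt.comp_hasDerivAt t hline)
    simpa [pd, hy, he, Function.comp_def] using this
  set φ : ℝ → ℝ := fun t => g (y t) - c * t with hφ
  have hφder : ∀ t ∈ Icc (0:ℝ) (r / 2), HasDerivAt φ (pd i g (y t) - c) t := by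
    intro t ht
    have h2 : HasDerivAt (fun τ : ℝ => c * τ) c t := by
      simpa using (hasDerivAt_id t).const_mul c
    exact (hder t ht).sub h2
  have hmono : MonotoneOn φ (Icc 0 (r / 2)) := by
    apply monotoneOn_of_deriv_nonneg (convex_Icc _ _)
    · intro t ht
      exact (hφder t ht).differentiableAt.continuousAt.continuousWithinAt
    · intro t ht
      exact ((hφder t (interior_subset ht)).differentiableAt).differentiableWithinAt
    · intro t ht
      rw [(hφder t (interior_subset ht)).deriv]
      linarith [hc t (interior_subset ht)]
  have hmem0 : (0:ℝ) ∈ Icc (0:ℝ) (r / 2) := ⟨le_rfl, by positivity⟩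
  have hmems : r / 2 ∈ Icc (0:ℝ) (r / 2) := ⟨by positivity, le_rfl⟩
  have hφle : φ 0 ≤ φ (r / 2) := hmono hmem0 hmems (by positivity)
  have hy0 : y 0 = x := by simp [hy]
  have hgap : c * (r / 2) ≤ g (y (r / 2)) - g x := by
    have := hφle
    simp only [hφ, hy0, mul_zero, sub_zero] at this
    linarith
  have hc2 : ε / (4 * M) = c * (r / 2) := by
    rw [hcdef]
    field_simp
    ring
  -- contradiction with continuity of g
  have hηx : dist x x₀ < η := lt_of_lt_of_le hxd (le_trans (min_le_left _ _) (by linarith))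
  have hgx : dist (g x) L < ε / (16 * M) := hηg hxΩ hηx
  have hηy : dist (y (r / 2)) x₀ < η := by
    calc dist (y (r / 2)) x₀ ≤ dist (y (r / 2)) x + dist x x₀ := dist_triangle _ _ _
      _ = r / 2 + dist x x₀ := by rw [hyd _ (by positivity)]
      _ < η := by
          have h1 : dist x x₀ < η / 2 := lt_of_lt_of_le hxd (min_le_left _ _)
          linarith [hrle]
  have hgy : dist (g (y (r / 2))) L < ε / (16 * M) := hηg (hymem _ hmems) hηy
  rw [Real.dist_eq] at hgx hgy
  have habs1 := abs_lt.mp hgx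
  have habs2 := abs_lt.mp hgy
  have h8 : ε / (8 * M) < ε / (4 * M) :=
    div_lt_div_of_pos_left hε (by positivity) (by linarith)
  have h16 : ε / (16 * M) + ε / (16 * M) = ε / (8 * M) := by ring
  linarith [hgap, hc2]

end Aux

section Aux2
open Metric

lemma core2pos {n : ℕ} {α : ℝ} (hα : α ∈ Ioo (0:ℝ) 1) {Ω : Set (En n)} (hΩo : IsOpen Ω)
    {ρ : En n → ℝ} {M : ℝ} (hMpos : 0 < M)
    (hρpos : ∀ x ∈ Ω, 0 < ρ x) (hρle : ∀ x ∈ Ω, ρ x ≤ M * Metric.infDist x Ωᶜ)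
    {g w₂ q : En n → ℝ} (hgdiff : ∀ x ∈ Ω, DifferentiableAt ℝ g x)
    {x₀ : En n} (hx₀ : x₀ ∈ frontier Ω) {L : ℝ} (hglim : Tendsto g (𝓝[Ω] x₀) (𝓝 L))
    {i : Fin n} (hw : ∀ x ∈ Ω, ρ x * pd i g x = w₂ x + q x)
    (hw₂ : IsHolderOn α Ω w₂) (hq : Tendsto q (𝓝[Ω] x₀) (𝓝 0))
    {ε : ℝ} (hε : 0 < ε) (hfreq : ∃ᶠ x in 𝓝[Ω] x₀, ε ≤ w₂ x) : False := by
  obtain ⟨C, hC⟩ := hw₂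
  set C' : ℝ := max C 1 with hC'
  have hC'pos : 0 < C' := lt_of_lt_of_le one_pos (le_max_right _ _)
  set δ₀ : ℝ := (ε / (4 * C')) ^ (α⁻¹) with hδ₀
  have hδ₀pos : 0 < δ₀ := Real.rpow_pos_of_pos (by positivity) _
  have hosc : ∀ x ∈ Ω, ∀ y ∈ Ω, dist y x ≤ δ₀ → |w₂ y - w₂ x| ≤ ε / 4 := by
    intro x hx y hy hd
    calc |w₂ y - w₂ x| ≤ C * dist y x ^ α := hC y hy x hx
      _ ≤ C' * dist y x ^ α := by
          apply mul_le_mul_of_nonneg_right (le_max_left _ _)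
          exact Real.rpow_nonneg dist_nonneg _
      _ ≤ C' * δ₀ ^ α := by
          apply mul_le_mul_of_nonneg_left _ hC'pos.le
          exact Real.rpow_le_rpow dist_nonneg hd hα.1.le
      _ = C' * (ε / (4 * C')) := by
          rw [hδ₀, Real.rpow_inv_rpow (by positivity) hα.1.ne']
      _ = ε / 4 := by field_simp
  obtain ⟨θ, hθpos, hθq⟩ := (tendsto_nhdsWithin_nhds.mp hq) (ε / 8) (by positivity)
  have hqsmall : ∀ y ∈ Ω, dist y x₀ < θ → |q y| < ε / 8 := by
    intro y hy hd
    have := hθq hy hd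
    rwa [Real.dist_eq, sub_zero] at this
  set δ : ℝ := min δ₀ (θ / 2) with hδdef
  have hδpos : 0 < δ := lt_min hδ₀pos (by positivity)
  have hev : ∀ᶠ x in 𝓝[Ω] x₀, (x ∈ Ω ∧ dist x x₀ < θ / 2) := by
    have h1 : ∀ᶠ x in 𝓝[Ω] x₀, dist x x₀ < θ / 2 := by
      apply eventually_nhdsWithin_of_eventually_nhds
      have : Metric.ball x₀ (θ / 2) ∈ 𝓝 x₀ := Metric.ball_mem_nhds x₀ (by positivity)
      filter_upwards [this] with a ha using Metric.mem_ball.mp ha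
    exact eventually_mem_nhdsWithin.and h1
  have hfreq2 : ∃ᶠ x in 𝓝[Ω] x₀, ∀ y ∈ Ω, dist y x ≤ δ → ε / 2 ≤ ρ y * pd i g y := by
    refine (hfreq.and_eventually hev).mono ?_
    rintro x ⟨hwx, hxΩ, hxθ⟩ y hyΩ hd
    have hyθ : dist y x₀ < θ := by
      calc dist y x₀ ≤ dist y x + dist x x₀ := dist_triangle _ _ _
        _ < θ := by
            have : dist y x ≤ θ / 2 := le_trans hd (min_le_right _ _)
            linarith
    have h1 : |w₂ y - w₂ x| ≤ ε / 4 := hosc x hxΩ y hyΩ (le_trans hd (min_le_left _ _))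
    have h2 : |q y| < ε / 8 := hqsmall y hyΩ hyθ
    rw [hw y hyΩ]
    have := abs_le.mp h1
    have := abs_lt.mp h2
    linarith [this.1]
  exact core hΩo hMpos hρpos hρle hgdiff hx₀ hglim (by positivity) hδpos hfreq2

lemma isHolderOn_neg {n : ℕ} {α : ℝ} {Ω : Set (En n)} {w : En n → ℝ}
    (h : IsHolderOn α Ω w) : IsHolderOn α Ω (fun x => -w x) := by
  obtain ⟨C, hC⟩ := h
  refine ⟨C, fun x hx y hy => ?_⟩
  have h1 := hC x hx y hy
  calc |(-w x) - (-w y)| = |w x - w y| := by rw [abs_sub_comm]; congr 1; ring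
    _ ≤ C * dist x y ^ α := h1
  
lemma core2 {n : ℕ} {α : ℝ} (hα : α ∈ Ioo (0:ℝ) 1) {Ω : Set (En n)} (hΩo : IsOpen Ω)
    {ρ : En n → ℝ} {M : ℝ} (hMpos : 0 < M)
    (hρpos : ∀ x ∈ Ω, 0 < ρ x) (hρle : ∀ x ∈ Ω, ρ x ≤ M * Metric.infDist x Ωᶜ)
    {g w₂ q : En n → ℝ} (hgdiff : ∀ x ∈ Ω, DifferentiableAt ℝ g x)
    {x₀ : En n} (hx₀ : x₀ ∈ frontier Ω) {L : ℝ} (hglim : Tendsto g (𝓝[Ω] x₀) (𝓝 L))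
    {i : Fin n} (hw : ∀ x ∈ Ω, ρ x * pd i g x = w₂ x + q x)
    (hw₂ : IsHolderOn α Ω w₂) (hq : Tendsto q (𝓝[Ω] x₀) (𝓝 0))
    (hne : ¬ Tendsto w₂ (𝓝[Ω] x₀) (𝓝 0)) : False := by
  obtain ⟨ε, hε, hfreq⟩ : ∃ ε > (0:ℝ), ∃ᶠ x in 𝓝[Ω] x₀, ε ≤ |w₂ x| := by
    by_contra h
    push_neg at h
    apply hne
    rw [Metric.tendsto_nhds]
    intro ε hεpos
    have h2 := h ε hεpos
    filter_upwards [h2] with x hx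
    rw [Real.dist_eq, sub_zero]
    exact hx
  have hfreq2 : (∃ᶠ x in 𝓝[Ω] x₀, ε ≤ w₂ x) ∨ (∃ᶠ x in 𝓝[Ω] x₀, ε ≤ -w₂ x) := by
    rw [← Filter.frequently_or_distrib]
    exact hfreq.mono fun x hx => le_abs.mp hx
  rcases hfreq2 with hf | hf
  · exact core2pos hα hΩo hMpos hρpos hρle hgdiff hx₀ hglim hw hw₂ hq hε hf
  · refine core2pos (w₂ := fun x => -w₂ x) (q := fun x => -q x) (g := fun x => -g x)
      hα hΩo hMpos hρpos hρle (fun x hx => (hgdiff x hx).neg) hx₀ hglim.neg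
      (i := i) ?_ (isHolderOn_neg hw₂) (by simpa using hq.neg) hε hf
    intro x hx
    have h1 : pd i (fun y => -g y) x = -(pd i g x) := by
      simp [pd, fderiv_neg]
    rw [h1]
    have := hw x hx
    ring_nf
    ring_nf at this
    linarith

end Aux2

open Metric

/-- **Vanishing of the weighted derivatives on the boundary**: if
`u ∈ C^{k,α}(Ω̄) ∩ C^{k+2,α}(Ω)` and `ρ^i ∇^{k+i} u` extends `C^α` to `Ω̄` for
`i = 1, 2`, then the extensions vanish on `∂Ω`. -/
theorem weighted_derivatives_vanish_on_boundary
    {n k : ℕ} {α : ℝ} (hα : α ∈ Ioo (0 : ℝ) 1)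
    (Ω : Set (En n)) (hΩo : IsOpen Ω) (hΩb : Bornology.IsBounded Ω)
    (hΩconn : IsConnected Ω)
    (ρ : En n → ℝ) (ν : En n → Fin n → ℝ)
    (hdef : DefiningFn Ω ρ ν)
    (u : En n → ℝ)
    (hu : MemHolderBar k α Ω u) (huloc : MemHolderLoc (k + 2) α Ω u)
    (h1 : ∀ l : List (Fin n), l.length = k + 1 →
      IsHolderOn α Ω (fun x => ρ x * pdAll l u x))
    (h2 : ∀ l : List (Fin n), l.length = k + 2 →
      IsHolderOn α Ω (fun x => (ρ x) ^ 2 * pdAll l u x)) :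
    (∀ l : List (Fin n), l.length = k + 1 →
      ∀ x₀ ∈ frontier Ω,
        Tendsto (fun x => ρ x * pdAll l u x) (𝓝[Ω] x₀) (𝓝 0)) ∧
    (∀ l : List (Fin n), l.length = k + 2 →
      ∀ x₀ ∈ frontier Ω,
        Tendsto (fun x => (ρ x) ^ 2 * pdAll l u x) (𝓝[Ω] x₀) (𝓝 0)) := by
  obtain ⟨hρpos, hρfr, hρc, hρd1, hνc, hνρ, hνunit⟩ := hdef
  have hclcomp : IsCompact (closure Ω) :=
    isCompact_of_isClosed_isBounded isClosed_closure hΩb.closure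
  have hclne : (closure Ω).Nonempty := hΩconn.nonempty.mono subset_closure
  have hFc : ContinuousOn (fun x => ∑ j, |ν x j|) (closure Ω) :=
    continuousOn_finset_sum _ (fun j _ => (hνc j).abs)
  obtain ⟨p, hp, hpmax⟩ := hclcomp.exists_isMaxOn hclne hFc
  set M : ℝ := (∑ j, |ν p j|) + 1 with hM
  have hMpos : 0 < M := by positivity
  have hνbound : ∀ x ∈ closure Ω, ∑ j, |ν x j| ≤ M := by
    intro x hx
    have h1 := hpmax hx
    simp only [hM]
    have h2 : (∑ j, |ν x j|) ≤ ∑ j, |ν p j| := h1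
    linarith
  have hfd : ∀ x ∈ Ω, ‖fderiv ℝ ρ x‖ ≤ M := by
    intro x hx
    calc ‖fderiv ℝ ρ x‖ ≤ ∑ j, |pd j ρ x| := opNorm_le_sum_abs_pd ρ x
      _ = ∑ j, |ν x j| := by
          apply Finset.sum_congr rfl
          intro j _
          rw [hνρ x hx j]
      _ ≤ M := hνbound x (subset_closure hx)
  have hνb : ∀ x ∈ closure Ω, ∀ j, |ν x j| ≤ M := by
    intro x hx j
    refine le_trans ?_ (hνbound x hx)
    exact Finset.single_le_sum (f := fun j => |ν x j|) (fun _ _ => abs_nonneg _)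
      (Finset.mem_univ j)
  have part1 : ∀ l : List (Fin n), l.length = k + 1 → ∀ x₀ ∈ frontier Ω,
      Tendsto (fun x => ρ x * pdAll l u x) (𝓝[Ω] x₀) (𝓝 0) := by
    intro l hl x₀ hx₀
    obtain ⟨i, l', rfl⟩ : ∃ i l', l = i :: l' := by
      cases l with
      | nil => simp at hl
      | cons a b => exact ⟨a, b, rfl⟩
    have hl' : l'.length = k := by simpa using hl
    have hx₀n : x₀ ∉ Ω := fun h => (hΩo.frontier_eq ▸ hx₀).2 h
    have hρle := rho_le_infDist hΩo hρc hρd1 hρfr hfd ⟨x₀, hx₀n⟩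
    obtain ⟨G, hGc, hGeq⟩ := hu.2.2.1 l' (le_of_eq hl')
    have hglim : Tendsto (pdAll l' u) (𝓝[Ω] x₀) (𝓝 (G x₀)) := by
      have h1 : Tendsto G (𝓝[Ω] x₀) (𝓝 (G x₀)) :=
        (hGc x₀ (frontier_subset_closure hx₀)).mono_left (nhdsWithin_mono x₀ subset_closure)
      apply h1.congr'
      exact eventuallyEq_of_mem self_mem_nhdsWithin (fun x hx => (hGeq hx).symm)
    have hudiff : ∀ x ∈ Ω, DifferentiableAt ℝ (pdAll l' u) x := by
      have h1 : ContDiffOn ℝ ((1 + l'.length : ℕ)) u Ω := by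
        apply huloc.1.of_le
        norm_cast
        omega
      have h2 := pdAll_contDiffOn hΩo l' 1 h1
      intro x hx
      exact (h2.contDiffAt (hΩo.mem_nhds hx)).differentiableAt (by simp)
    by_contra hne
    exact core2 (w₂ := fun x => ρ x * pd i (pdAll l' u) x) (q := fun _ => (0:ℝ))
      hα hΩo hMpos hρpos hρle hudiff hx₀ hglim
      (fun x _ => (add_zero _).symm) (h1 (i :: l') (by simpa using hl'))
      tendsto_const_nhds hne
  have part2 : ∀ l : List (Fin n), l.length = k + 2 → ∀ x₀ ∈ frontier Ω,
      Tendsto (fun x => (ρ x) ^ 2 * pdAll l u x) (𝓝[Ω] x₀) (𝓝 0) := by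
    intro l hl x₀ hx₀
    obtain ⟨i, l', rfl⟩ : ∃ i l', l = i :: l' := by
      cases l with
      | nil => simp at hl
      | cons a b => exact ⟨a, b, rfl⟩
    have hl' : l'.length = k + 1 := by simpa using hl
    have hx₀n : x₀ ∉ Ω := fun h => (hΩo.frontier_eq ▸ hx₀).2 h
    have hρle := rho_le_infDist hΩo hρc hρd1 hρfr hfd ⟨x₀, hx₀n⟩
    have hvdiff : ∀ x ∈ Ω, DifferentiableAt ℝ (pdAll l' u) x := by
      have h1 : ContDiffOn ℝ ((1 + l'.length : ℕ)) u Ω := by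
        apply huloc.1.of_le
        norm_cast
        omega
      have h2 := pdAll_contDiffOn hΩo l' 1 h1
      intro x hx
      exact (h2.contDiffAt (hΩo.mem_nhds hx)).differentiableAt (by simp)
    have hρdiff : ∀ x ∈ Ω, DifferentiableAt ℝ ρ x := fun x hx =>
      (hρd1.contDiffAt (hΩo.mem_nhds hx)).differentiableAt one_ne_zero
    have hgdiff : ∀ x ∈ Ω, DifferentiableAt ℝ (fun y => ρ y * pdAll l' u y) x :=
      fun x hx => (hρdiff x hx).mul (hvdiff x hx)
    have hglim : Tendsto (fun x => ρ x * pdAll l' u x) (𝓝[Ω] x₀) (𝓝 0) :=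
      part1 l' hl' x₀ hx₀
    have hw : ∀ x ∈ Ω, ρ x * pd i (fun y => ρ y * pdAll l' u y) x
        = (ρ x ^ 2 * pd i (pdAll l' u) x) + (ν x i * (ρ x * pdAll l' u x)) := by
      intro x hx
      have h1 : pd i (fun y => ρ y * pdAll l' u y) x
          = ρ x * pd i (pdAll l' u) x + pdAll l' u x * pd i ρ x := by
        simp only [pd]
        rw [fderiv_fun_mul (hρdiff x hx) (hvdiff x hx)]
        simp
      rw [h1, ← hνρ x hx i]
      ring
    have hq : Tendsto (fun x => ν x i * (ρ x * pdAll l' u x)) (𝓝[Ω] x₀) (𝓝 0) := by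
      apply squeeze_zero_norm' (a := fun x => M * |ρ x * pdAll l' u x|)
      · filter_upwards [self_mem_nhdsWithin] with x hx
        rw [Real.norm_eq_abs, abs_mul]
        exact mul_le_mul_of_nonneg_right (hνb x (subset_closure hx) i) (abs_nonneg _)
      · have h3 := (hglim.abs).const_mul M
        simpa using h3
    by_contra hne
    exact core2 hα hΩo hMpos hρpos hρle hgdiff hx₀ hglim hw
      (h2 (i :: l') (by simpa using hl')) hq hne
  exact ⟨part1, part2⟩
end

section
/- Let Ω⊂ℝ^n be a bounded domain with a C^∞(Ω̄) defining function ρ such that (1−|∇ρ|²)/ρ extends to a function in C^∞(Ω̄). Let a>0, b, c, s be real constants with s>0 and a s(s−1) + b s + c = 0, and let L = aρ²Δ + bρ∇ρ·∇ + c. Then for every ψ ∈ C^∞(Ω̄) there exists η ∈ C^∞(Ω̄) such that L(ψρ^s) = η ρ^{s+1} in Ω. -/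
open Set Filter Topology

open Set Filter Topology

/-- `w ∈ C^∞(Ω̄)`: smooth in `Ω` with all derivatives extending continuously to `Ω̄`. -/
def SmoothBar {n : ℕ} (Ω : Set (En n)) (w : En n → ℝ) : Prop :=
  ContDiffOn ℝ (⊤ : ℕ∞) w Ω ∧
  ∀ l : List (Fin n), ∃ g : En n → ℝ,
    ContinuousOn g (closure Ω) ∧ EqOn (pdAll l w) g Ω

/-- The operator `L = aρ²Δ + bρ∇ρ·∇ + c` (with constant coefficients `a, b, c`). -/
noncomputable def LopEx {n : ℕ} (ρ : En n → ℝ) (a b c : ℝ) (w : En n → ℝ) (x : En n) : ℝ :=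
  a * (ρ x) ^ 2 * (∑ i, pd2 i i w x)
    + b * ρ x * (∑ i, pd i ρ x * pd i w x) + c * w x


section Aux
open Set Filter Topology
variable {n : ℕ} {Ω : Set (En n)}

variable {Ω : Set (En n)}

private lemma pd_congr (hΩ : IsOpen Ω) {u v : En n → ℝ} (h : EqOn u v Ω) (i : Fin n) :
    EqOn (pd i u) (pd i v) Ω := by
  intro x hx
  unfold pd
  rw [Filter.EventuallyEq.fderiv_eq (Filter.eventuallyEq_of_mem (hΩ.mem_nhds hx) h)]

private lemma pdAll_congr (hΩ : IsOpen Ω) {u v : En n → ℝ} (h : EqOn u v Ω) (l : List (Fin n)) :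
    EqOn (pdAll l u) (pdAll l v) Ω := by
  induction l with
  | nil => exact h
  | cons i l ih => exact pd_congr hΩ ih i

private lemma pdAll_pd (l : List (Fin n)) (i : Fin n) (f : En n → ℝ) :
    pdAll l (pd i f) = pdAll (l ++ [i]) f := by
  induction l with
  | nil => rfl
  | cons j l ih => simp [pdAll, ih]

private lemma contDiffOn_pd (hΩ : IsOpen Ω) {w : En n → ℝ} (hw : ContDiffOn ℝ (⊤:ℕ∞) w Ω) (i : Fin n) :
    ContDiffOn ℝ (⊤:ℕ∞) (pd i w) Ω := by
  have h1 : ContDiffOn ℝ (⊤:ℕ∞) (fderiv ℝ w) Ω := hw.fderiv_of_isOpen hΩ (le_of_eq rfl)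
  exact (ContinuousLinearMap.apply ℝ ℝ (EuclideanSpace.single i 1)).contDiff.comp_contDiffOn h1

private lemma contDiffOn_pdAll (hΩ : IsOpen Ω) {w : En n → ℝ} (hw : ContDiffOn ℝ (⊤:ℕ∞) w Ω)
    (l : List (Fin n)) : ContDiffOn ℝ (⊤:ℕ∞) (pdAll l w) Ω := by
  induction l with
  | nil => exact hw
  | cons i l ih => exact contDiffOn_pd hΩ ih i

private lemma dAt (hΩ : IsOpen Ω) {w : En n → ℝ} (hw : ContDiffOn ℝ (⊤:ℕ∞) w Ω) {x : En n} (hx : x ∈ Ω) :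
    DifferentiableAt ℝ w x :=
  (hw.differentiableOn (by simp)).differentiableAt (hΩ.mem_nhds hx)

private lemma pd_add {u v : En n → ℝ} {x : En n} (hu : DifferentiableAt ℝ u x)
    (hv : DifferentiableAt ℝ v x) (i : Fin n) :
    pd i (fun y => u y + v y) x = pd i u x + pd i v x := by
  unfold pd
  rw [fderiv_fun_add hu hv]; rfl

private lemma pd_mul {u v : En n → ℝ} {x : En n} (hu : DifferentiableAt ℝ u x)
    (hv : DifferentiableAt ℝ v x) (i : Fin n) :
    pd i (fun y => u y * v y) x = pd i u x * v x + u x * pd i v x := by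
  unfold pd
  rw [fderiv_fun_mul hu hv]
  simp [smul_eq_mul]
  ring

private lemma pd_sum {ι : Type*} (s : Finset ι) {w : ι → En n → ℝ} {x : En n}
    (hw : ∀ k ∈ s, DifferentiableAt ℝ (w k) x) (i : Fin n) :
    pd i (fun y => ∑ k ∈ s, w k y) x = ∑ k ∈ s, pd i (w k) x := by
  unfold pd
  rw [fderiv_fun_sum hw]
  simp

private lemma pd_const (c : ℝ) (i : Fin n) : pd i (fun _ : En n => c) = fun _ => 0 := by
  funext y; simp [pd]

private lemma pdAll_const (c : ℝ) (l : List (Fin n)) :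
    ∃ d : ℝ, pdAll l (fun _ : En n => c) = fun _ => d := by
  induction l with
  | nil => exact ⟨c, rfl⟩
  | cons i l ih =>
    obtain ⟨d, hd⟩ := ih
    refine ⟨0, ?_⟩
    show pd i (pdAll l fun _ => c) = fun _ => 0
    rw [hd, pd_const]

private lemma smoothBar_const (c : ℝ) : SmoothBar Ω (fun _ => c) := by
  refine ⟨contDiffOn_const, fun l => ?_⟩
  obtain ⟨d, hd⟩ := pdAll_const c l
  exact ⟨fun _ => d, continuousOn_const, fun x _ => by rw [hd]⟩


private lemma pdAll_add (hΩ : IsOpen Ω) {f g : En n → ℝ} (hf : ContDiffOn ℝ (⊤:ℕ∞) f Ω)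
    (hg : ContDiffOn ℝ (⊤:ℕ∞) g Ω) (l : List (Fin n)) :
    EqOn (pdAll l (fun x => f x + g x)) (fun x => pdAll l f x + pdAll l g x) Ω := by
  induction l with
  | nil => exact fun x _ => rfl
  | cons i l ih =>
    intro x hx
    have h1 := pd_congr hΩ ih i hx
    show pd i (pdAll l fun x => f x + g x) x = _
    rw [h1, pd_add (dAt hΩ (contDiffOn_pdAll hΩ hf l) hx) (dAt hΩ (contDiffOn_pdAll hΩ hg l) hx)]
    rfl

private lemma smoothBar_add (hΩ : IsOpen Ω) {f g : En n → ℝ} (hf : SmoothBar Ω f) (hg : SmoothBar Ω g) :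
    SmoothBar Ω (fun x => f x + g x) := by
  refine ⟨hf.1.add hg.1, fun l => ?_⟩
  obtain ⟨gf, hgf, hef⟩ := hf.2 l
  obtain ⟨gg, hgg, heg⟩ := hg.2 l
  refine ⟨fun x => gf x + gg x, hgf.add hgg, fun x hx => ?_⟩
  rw [pdAll_add hΩ hf.1 hg.1 l hx]
  show pdAll l f x + pdAll l g x = gf x + gg x
  rw [hef hx, heg hx]

private lemma smoothBar_pd (hΩ : IsOpen Ω) {f : En n → ℝ} (hf : SmoothBar Ω f) (i : Fin n) :
    SmoothBar Ω (pd i f) := by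
  refine ⟨contDiffOn_pd hΩ hf.1 i, fun l => ?_⟩
  obtain ⟨g, hg, he⟩ := hf.2 (l ++ [i])
  exact ⟨g, hg, by rw [pdAll_pd]; exact he⟩


private lemma dAt_listsum (hΩ : IsOpen Ω) {x : En n} (hx : x ∈ Ω)
    (ns : List ((En n → ℝ) × (En n → ℝ))) (hns : ∀ p ∈ ns, SmoothBar Ω p.1 ∧ SmoothBar Ω p.2) :
    DifferentiableAt ℝ (fun x => (ns.map (fun p => p.1 x * p.2 x)).sum) x := by
  induction ns with
  | nil => simp only [List.map_nil, List.sum_nil]; exact differentiableAt_const 0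
  | cons q ns ih =>
    have hq := hns q List.mem_cons_self
    have h2 := ih (fun p hp => hns p (List.mem_cons_of_mem q hp))
    simp only [List.map_cons, List.sum_cons]
    exact ((dAt hΩ hq.1.1 hx).mul (dAt hΩ hq.2.1 hx)).add h2

private lemma ext_listsum (hΩ : IsOpen Ω)
    (ns : List ((En n → ℝ) × (En n → ℝ))) (hns : ∀ p ∈ ns, SmoothBar Ω p.1 ∧ SmoothBar Ω p.2) :
    ∃ G : En n → ℝ, ContinuousOn G (closure Ω) ∧
      EqOn (fun x => (ns.map (fun p => p.1 x * p.2 x)).sum) G Ω := by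
  induction ns with
  | nil => exact ⟨fun _ => 0, continuousOn_const, fun x _ => by simp⟩
  | cons q ns ih =>
    have hq := hns q List.mem_cons_self
    obtain ⟨G, hG, heG⟩ := ih (fun p hp => hns p (List.mem_cons_of_mem q hp))
    obtain ⟨g1, hg1, he1⟩ := hq.1.2 []
    obtain ⟨g2, hg2, he2⟩ := hq.2.2 []
    refine ⟨fun x => g1 x * g2 x + G x, (hg1.mul hg2).add hG, fun x hx => ?_⟩
    simp only [List.map_cons, List.sum_cons]
    rw [show q.1 x = g1 x from he1 hx, show q.2 x = g2 x from he2 hx, ← heG hx]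

/-- Key Leibniz induction for products. -/
private lemma smoothBar_mul (hΩ : IsOpen Ω) {f g : En n → ℝ} (hf : SmoothBar Ω f) (hg : SmoothBar Ω g) :
    SmoothBar Ω (fun x => f x * g x) := by
  refine ⟨hf.1.mul hg.1, fun l => ?_⟩
  suffices h : ∃ ms : List ((En n → ℝ) × (En n → ℝ)),
      (∀ p ∈ ms, SmoothBar Ω p.1 ∧ SmoothBar Ω p.2) ∧
      EqOn (pdAll l (fun x => f x * g x))
        (fun x => (ms.map (fun p => p.1 x * p.2 x)).sum) Ω by
    obtain ⟨ms, hms, he⟩ := h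
    obtain ⟨G, hG, heG⟩ := ext_listsum hΩ ms hms
    exact ⟨G, hG, fun x hx => by rw [he hx, heG hx]⟩
  induction l with
  | nil =>
    exact ⟨[(f, g)], by simp [hf, hg], by intro x _; show f x * g x = _; simp⟩
  | cons i l ih =>
    obtain ⟨ms, hms, he⟩ := ih
    refine ⟨ms.map (fun p => (pd i p.1, p.2)) ++ ms.map (fun p => (p.1, pd i p.2)), ?_, ?_⟩
    · intro p hp
      rcases List.mem_append.1 hp with h | h <;> obtain ⟨q, hq, rfl⟩ := List.mem_map.1 h
      · exact ⟨smoothBar_pd hΩ (hms q hq).1 i, (hms q hq).2⟩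
      · exact ⟨(hms q hq).1, smoothBar_pd hΩ (hms q hq).2 i⟩
    · intro x hx
      show pd i (pdAll l fun x => f x * g x) x = _
      rw [pd_congr hΩ he i hx]
      have key : ∀ ns : List ((En n → ℝ) × (En n → ℝ)),
          (∀ p ∈ ns, SmoothBar Ω p.1 ∧ SmoothBar Ω p.2) →
          pd i (fun x => (ns.map (fun p => p.1 x * p.2 x)).sum) x =
          ((ns.map (fun p => (pd i p.1, p.2)) ++ ns.map (fun p => (p.1, pd i p.2))).map
            (fun p => p.1 x * p.2 x)).sum := by
        intro ns hns
        induction ns with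
        | nil => simp [pd_const]
        | cons q ns ihn =>
          have hq := hns q List.mem_cons_self
          have hns' : ∀ p ∈ ns, SmoothBar Ω p.1 ∧ SmoothBar Ω p.2 :=
            fun p hp => hns p (List.mem_cons_of_mem q hp)
          have d1 : DifferentiableAt ℝ (fun x => q.1 x * q.2 x) x :=
            (dAt hΩ hq.1.1 hx).mul (dAt hΩ hq.2.1 hx)
          have d2 := dAt_listsum hΩ hx ns hns'
          have e1 : pd i (fun x => q.1 x * q.2 x + (ns.map (fun p => p.1 x * p.2 x)).sum) x
              = pd i (fun x => q.1 x * q.2 x) x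
                + pd i (fun x => (ns.map (fun p => p.1 x * p.2 x)).sum) x :=
            pd_add d1 d2 i
          simp only [List.map_cons, List.sum_cons]
          rw [e1, ihn hns', pd_mul (dAt hΩ hq.1.1 hx) (dAt hΩ hq.2.1 hx)]
          simp [List.sum_append, List.map_append]
          ring
      rw [key ms hms]

private lemma smoothBar_sum (hΩ : IsOpen Ω) {ι : Type*} (t : Finset ι) (f : ι → En n → ℝ)
    (hf : ∀ i ∈ t, SmoothBar Ω (f i)) : SmoothBar Ω (fun x => ∑ i ∈ t, f i x) := by
  classical
  induction t using Finset.induction with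
  | empty => simpa using smoothBar_const (Ω := Ω) 0
  | insert a t' hni ih =>
    have h1 : (fun x => ∑ i ∈ insert a t', f i x) = fun x => f a x + ∑ i ∈ t', f i x :=
      funext fun x => Finset.sum_insert hni
    rw [h1]
    exact smoothBar_add hΩ (hf a (Finset.mem_insert_self _ _))
      (ih fun i hi => hf i (Finset.mem_insert_of_mem hi))

end Aux
/-- **Case 1 of Example 2.1**: if `s > 0` solves `as(s-1)+bs+c = 0`, then for every
`ψ ∈ C^∞(Ω̄)` one has `L(ψρˢ) = ηρ^{s+1}` for some `η ∈ C^∞(Ω̄)`. -/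
theorem singular_monomial_factor
    {n : ℕ} (Ω : Set (En n)) (hΩo : IsOpen Ω) (hΩb : Bornology.IsBounded Ω)
    (hΩconn : IsConnected Ω)
    (ρ : En n → ℝ) (ν : En n → Fin n → ℝ)
    (hdef : DefiningFn Ω ρ ν) (hρ : SmoothBar Ω ρ)
    (q : En n → ℝ) (hq : SmoothBar Ω q)
    (hq' : ∀ x ∈ Ω, 1 - (∑ i, (pd i ρ x) ^ 2) = ρ x * q x)
    (a b c s : ℝ) (ha : 0 < a) (hs : 0 < s)
    (hroot : a * s * (s - 1) + b * s + c = 0)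
    (ψ : En n → ℝ) (hψ : SmoothBar Ω ψ) :
    ∃ η : En n → ℝ, SmoothBar Ω η ∧
      ∀ x ∈ Ω, LopEx ρ a b c (fun y => ψ y * ρ y ^ s) x = η x * ρ x ^ (s + 1) := by
  
  classical
  have hΩo := hΩo
  set η : En n → ℝ := fun x =>
    a * ρ x * (∑ i, pd2 i i ψ x) + (2*a*s+b) * (∑ i, pd i ρ x * pd i ψ x)
      + a * s * ψ x * (∑ i, pd2 i i ρ x) + c * q x * ψ x with hη
  have hηs : SmoothBar Ω η := by
    apply smoothBar_add hΩo
    apply smoothBar_add hΩo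
    apply smoothBar_add hΩo
    · exact smoothBar_mul hΩo (smoothBar_mul hΩo (smoothBar_const a) hρ)
        (smoothBar_sum hΩo Finset.univ _ fun i _ =>
          smoothBar_pd hΩo (smoothBar_pd hΩo hψ i) i)
    · exact smoothBar_mul hΩo (smoothBar_const (2*a*s+b))
        (smoothBar_sum hΩo Finset.univ _ fun i _ =>
          smoothBar_mul hΩo (smoothBar_pd hΩo hρ i) (smoothBar_pd hΩo hψ i))
    · exact smoothBar_mul hΩo (smoothBar_mul hΩo
        (smoothBar_mul hΩo (smoothBar_const a) (smoothBar_const s)) hψ)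
        (smoothBar_sum hΩo Finset.univ _ fun i _ =>
          smoothBar_pd hΩo (smoothBar_pd hΩo hρ i) i)
    · exact smoothBar_mul hΩo (smoothBar_mul hΩo (smoothBar_const c) hq) hψ
  refine ⟨η, hηs, fun x hx => ?_⟩
  have hr : 0 < ρ x := hdef.1 x hx
  -- first derivative formula
  have hD1 : ∀ j : Fin n, ∀ y ∈ Ω, pd j (fun z => ψ z * ρ z ^ s) y =
      pd j ψ y * ρ y ^ s + s * ψ y * ρ y ^ (s-1) * pd j ρ y := by
    intro j y hy
    have hry : 0 < ρ y := hdef.1 y hy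
    have hρd : HasFDerivAt ρ (fderiv ℝ ρ y) y := (dAt hΩo hρ.1 hy).hasFDerivAt
    have hψd : HasFDerivAt ψ (fderiv ℝ ψ y) y := (dAt hΩo hψ.1 hy).hasFDerivAt
    have hrp : HasFDerivAt (fun z => ρ z ^ s) ((s * ρ y ^ (s-1)) • fderiv ℝ ρ y) y :=
      hρd.rpow_const (Or.inl (ne_of_gt hry))
    have H := hψd.fun_mul hrp
    show fderiv ℝ (fun z => ψ z * ρ z ^ s) y (EuclideanSpace.single j 1) = _
    rw [H.fderiv]
    simp only [ContinuousLinearMap.add_apply, ContinuousLinearMap.smul_apply, smul_eq_mul, pd]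
    ring
  -- second derivative formula
  have hD2 : ∀ i j : Fin n, pd2 i j (fun z => ψ z * ρ z ^ s) x =
      pd2 i j ψ x * ρ x ^ s + s * pd j ψ x * ρ x ^ (s-1) * pd i ρ x
        + s * pd i ψ x * ρ x ^ (s-1) * pd j ρ x
        + s * (s-1) * ψ x * ρ x ^ (s-2) * pd i ρ x * pd j ρ x
        + s * ψ x * ρ x ^ (s-1) * pd2 i j ρ x := by
    intro i j
    have hρd : HasFDerivAt ρ (fderiv ℝ ρ x) x := (dAt hΩo hρ.1 hx).hasFDerivAt
    have hψd : HasFDerivAt ψ (fderiv ℝ ψ x) x := (dAt hΩo hψ.1 hx).hasFDerivAt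
    have hpjψ : HasFDerivAt (pd j ψ) (fderiv ℝ (pd j ψ) x) x :=
      (dAt hΩo (contDiffOn_pd hΩo hψ.1 j) hx).hasFDerivAt
    have hpjρ : HasFDerivAt (pd j ρ) (fderiv ℝ (pd j ρ) x) x :=
      (dAt hΩo (contDiffOn_pd hΩo hρ.1 j) hx).hasFDerivAt
    have hrs : HasFDerivAt (fun z => ρ z ^ s) ((s * ρ x ^ (s-1)) • fderiv ℝ ρ x) x :=
      hρd.rpow_const (Or.inl (ne_of_gt hr))
    have hrs1 : HasFDerivAt (fun z => ρ z ^ (s-1)) (((s-1) * ρ x ^ (s-1-1)) • fderiv ℝ ρ x) x :=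
      hρd.rpow_const (Or.inl (ne_of_gt hr))
    have hA := hpjψ.fun_mul hrs
    have hB := ((hψd.const_mul s).fun_mul hrs1).fun_mul hpjρ
    have H := hA.fun_add hB
    have hcg : pd2 i j (fun z => ψ z * ρ z ^ s) x =
        pd i (fun z => pd j ψ z * ρ z ^ s + s * ψ z * ρ z ^ (s-1) * pd j ρ z) x :=
      pd_congr hΩo (fun y hy => hD1 j y hy) i hx
    rw [hcg]
    show fderiv ℝ _ x (EuclideanSpace.single i 1) = _
    rw [H.fderiv]
    simp only [ContinuousLinearMap.add_apply, ContinuousLinearMap.smul_apply, smul_eq_mul,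
      pd2, pd, show s - 1 - 1 = s - 2 by ring]
    ring
  -- assemble
  have e2 : ∑ i, pd2 i i (fun z => ψ z * ρ z ^ s) x =
      (∑ i, pd2 i i ψ x) * ρ x ^ s
        + (∑ i, pd i ρ x * pd i ψ x) * (2 * s * ρ x ^ (s-1))
        + (∑ i, (pd i ρ x)^2) * (s * (s-1) * ψ x * ρ x ^ (s-2))
        + (∑ i, pd2 i i ρ x) * (s * ψ x * ρ x ^ (s-1)) := by
    have step : ∀ i : Fin n, pd2 i i (fun z => ψ z * ρ z ^ s) x =
        pd2 i i ψ x * ρ x ^ s + pd i ρ x * pd i ψ x * (2 * s * ρ x ^ (s-1))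
          + (pd i ρ x)^2 * (s * (s-1) * ψ x * ρ x ^ (s-2))
          + pd2 i i ρ x * (s * ψ x * ρ x ^ (s-1)) := fun i => by rw [hD2 i i]; ring
    rw [Finset.sum_congr rfl (fun i _ => step i)]
    rw [Finset.sum_add_distrib, Finset.sum_add_distrib, Finset.sum_add_distrib,
      ← Finset.sum_mul, ← Finset.sum_mul, ← Finset.sum_mul, ← Finset.sum_mul]
  have e1 : ∑ i, pd i ρ x * pd i (fun z => ψ z * ρ z ^ s) x =
      (∑ i, pd i ρ x * pd i ψ x) * ρ x ^ s
        + (∑ i, (pd i ρ x)^2) * (s * ψ x * ρ x ^ (s-1)) := by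
    have step : ∀ i : Fin n, pd i ρ x * pd i (fun z => ψ z * ρ z ^ s) x =
        pd i ρ x * pd i ψ x * ρ x ^ s + (pd i ρ x)^2 * (s * ψ x * ρ x ^ (s-1)) :=
      fun i => by rw [hD1 i x hx]; ring
    rw [Finset.sum_congr rfl (fun i _ => step i)]
    rw [Finset.sum_add_distrib, ← Finset.sum_mul, ← Finset.sum_mul]
  have hts : ρ x ^ s = ρ x ^ (s-2) * (ρ x * ρ x) := by
    rw [show s = (s-2) + 2 by ring, Real.rpow_add hr, Real.rpow_two]
    ring_nf
  have ht1 : ρ x ^ (s-1) = ρ x ^ (s-2) * ρ x := by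
    rw [show s - 1 = (s-2) + 1 by ring, Real.rpow_add hr, Real.rpow_one]
  have htp : ρ x ^ (s+1) = ρ x ^ (s-2) * (ρ x * ρ x * ρ x) := by
    rw [show s + 1 = (s-2) + 3 by ring, Real.rpow_add hr,
      show (3:ℝ) = ((3:ℕ):ℝ) by norm_num, Real.rpow_natCast]
    ring
  have hGq := hq' x hx
  show a * ρ x ^ 2 * (∑ i, pd2 i i (fun z => ψ z * ρ z ^ s) x)
      + b * ρ x * (∑ i, pd i ρ x * pd i (fun z => ψ z * ρ z ^ s) x)
      + c * (ψ x * ρ x ^ s) = η x * ρ x ^ (s+1)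
  rw [e2, e1, hη, hts, ht1, htp]
  linear_combination ((∑ i, (pd i ρ x)^2) * ψ x * ρ x ^ (s-2) * ρ x * ρ x) * hroot
    + (c * ψ x * ρ x ^ (s-2) * ρ x * ρ x) * hGq
end

section
/- Let A>0 and α∈(0,1) be constants, w a function on G_1 that is α-Hölder continuous on compact subsets of G_1, and w_0 ∈ C^α(B'_1). Suppose that for every (x',t)∈G_1 with B_{t/2}(x',t) ⊂ G_1 one has |w(x',t) − w_0(x')| ≤ A t^α and [w]_{C^α(B_{t/2}(x',t))} ≤ A. Then w extends to a C^α function on Ḡ_r for every r∈(0,1), and |w|_{C^α(Ḡ_{1/2})} ≤ 5A + |w_0|_{C^α(B'_1)}. -/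
open Set Filter Topology

open Set Filter Topology

variable {d : ℕ}

/-- The normal coordinate `t = x_n`. -/
noncomputable def tc (x : En (d + 1)) : ℝ := x (Fin.last d)

/-- The tangential projection `x ↦ x'`. -/
noncomputable def proj (x : En (d + 1)) : En d := WithLp.toLp 2 (fun i : Fin d => x i.castSucc)

/-- The embedding `x' ↦ (x', 0)` of `ℝ^{n-1}` onto `{t = 0}`. -/
noncomputable def emb (y : En d) : En (d + 1) :=
  WithLp.toLp 2 (fun i : Fin (d + 1) => if h : (i : ℕ) < d then y ⟨i, h⟩ else 0)

/-- The half-cube `G_r = {(x',t) : |x'| < r, 0 < t < r}`. -/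
def G (d : ℕ) (r : ℝ) : Set (En (d + 1)) :=
  {x | ‖proj x‖ < r ∧ 0 < tc x ∧ tc x < r}

/-- The flat boundary portion `Σ_r = {(x',0) : |x'| < r}`. -/
def Sig (d : ℕ) (r : ℝ) : Set (En (d + 1)) :=
  {x | ‖proj x‖ < r ∧ tc x = 0}

/-- `Q(μ) = μ(μ-1)a_{nn} + μ b_n + c`, a function on `G_1`. -/
def Qf (a : Fin (d + 1) → Fin (d + 1) → En (d + 1) → ℝ)
    (b : Fin (d + 1) → En (d + 1) → ℝ) (c : En (d + 1) → ℝ)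
    (μ : ℝ) (x : En (d + 1)) : ℝ :=
  μ * (μ - 1) * a (Fin.last d) (Fin.last d) x + μ * b (Fin.last d) x + c x

/-- Partial derivatives taken within the closed set `Ḡ_1` (well defined up to the
boundary since `Ḡ_1` is convex). -/
noncomputable def pdW (i : Fin (d + 1)) (w : En (d + 1) → ℝ) (x : En (d + 1)) : ℝ :=
  fderivWithin ℝ w (closure (G d 1)) x (EuclideanSpace.single i 1)

/-- Iterated partial derivatives within `Ḡ_1`. -/
noncomputable def pdWAll : List (Fin (d + 1)) → (En (d + 1) → ℝ) → En (d + 1) → ℝ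
  | [], w => w
  | i :: l, w => pdW i (pdWAll l w)

/-- `w ∈ C^{k,β}(Ḡ_1)`. -/
def MemBarG (d k : ℕ) (β : ℝ) (w : En (d + 1) → ℝ) : Prop :=
  ContDiffOn ℝ k w (closure (G d 1)) ∧
  ∀ l : List (Fin (d + 1)), l.length = k →
    IsHolderOn β (closure (G d 1)) (pdWAll l w)

/-- The norm `|w|_{C^{k,β}(Ḡ_1)}`. -/
noncomputable def normCkG (d k : ℕ) (β : ℝ) (w : En (d + 1) → ℝ) : ℝ :=
  (∑ i ∈ Finset.range (k + 1), ∑ v : Fin i → Fin (d + 1),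
    supNorm (G d 1) (pdWAll (List.ofFn v) w)) +
  ∑ v : Fin k → Fin (d + 1), holderSemi β (G d 1) (pdWAll (List.ofFn v) w)

/-- Iterated tangential derivatives `D^τ_{x'} w` (interior derivatives). -/
noncomputable def pdTan (l : List (Fin d)) (w : En (d + 1) → ℝ) : En (d + 1) → ℝ :=
  pdAll (l.map Fin.castSucc) w

/-- The tangential derivative `∂_β w` taken within `Ḡ_1` (a line derivative). -/
noncomputable def tdW (β : Fin d) (w : En (d + 1) → ℝ) (x : En (d + 1)) : ℝ :=
  lineDerivWithin ℝ w (closure (G d 1)) x (EuclideanSpace.single β.castSucc 1)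

/-- Iterated tangential derivatives within `Ḡ_1`. -/
noncomputable def tdWAll : List (Fin d) → (En (d + 1) → ℝ) → En (d + 1) → ℝ
  | [], w => w
  | β :: l, w => tdW β (tdWAll l w)

/-- Partial derivatives in `ℝ^{n-1}` (for functions on the flat boundary). -/
noncomputable def pdE (i : Fin d) (w : En d → ℝ) (y : En d) : ℝ :=
  fderiv ℝ w y (EuclideanSpace.single i 1)

/-- Iterated partial derivatives in `ℝ^{n-1}`. -/
noncomputable def pdEAll : List (Fin d) → (En d → ℝ) → En d → ℝ
  | [], w => w
  | i :: l, w => pdE i (pdEAll l w)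

/-- The boundary value `u_0 = (f/c)(·,0)` as a function on `ℝ^{n-1}`. -/
noncomputable def bdryVal (f c : En (d + 1) → ℝ) (y : En d) : ℝ :=
  f (emb y) / c (emb y)


section AuxLemmas

open Set Filter Topology

lemma rpow_subadd' {α a b : ℝ} (hα0 : 0 ≤ α) (hα1 : α ≤ 1) (ha : 0 ≤ a) (hb : 0 ≤ b) :
    (a + b) ^ α ≤ a ^ α + b ^ α := by
  have h := NNReal.rpow_add_le_add_rpow (⟨a, ha⟩ : NNReal) (⟨b, hb⟩ : NNReal) hα0 hα1
  have h2 := NNReal.coe_le_coe.mpr h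
  exact h2

lemma holder_tri' {X : Type*} [PseudoMetricSpace X] {α C : ℝ} (hα0 : 0 < α) (hα1 : α ≤ 1)
    (hC : 0 ≤ C) (x y z : X) :
    C * dist x y ^ α ≤ C * dist x z ^ α + C * dist z y ^ α := by
  have h1 : dist x y ^ α ≤ (dist x z + dist z y) ^ α :=
    Real.rpow_le_rpow dist_nonneg (dist_triangle x z y) hα0.le
  have h2 : (dist x z + dist z y) ^ α ≤ dist x z ^ α + dist z y ^ α :=
    rpow_subadd' hα0.le hα1 dist_nonneg dist_nonneg
  nlinarith [h1, h2]

lemma holder_extend' {X : Type*} [PseudoMetricSpace X] {α C : ℝ} (hα0 : 0 < α) (hα1 : α ≤ 1)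
    (hC : 0 ≤ C) {s : Set X} (hs : s.Nonempty) {w : X → ℝ}
    (hw : ∀ x ∈ s, ∀ y ∈ s, |w x - w y| ≤ C * dist x y ^ α) :
    ∃ g : X → ℝ, Continuous g ∧ Set.EqOn w g s := by
  obtain ⟨y₀, hy₀⟩ := hs
  set F : X → X → ℝ := fun x y => w y + C * dist x y ^ α with hF
  have hbdd : ∀ x : X, ∀ y ∈ s, w y₀ - C * dist x y₀ ^ α ≤ F x y := by
    intro x y hy
    have h1 := (abs_le.mp (hw _ hy₀ _ hy)).2
    have h2 : C * dist y₀ y ^ α ≤ C * dist y₀ x ^ α + C * dist x y ^ α :=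
      holder_tri' hα0 hα1 hC y₀ y x
    have h3 : dist y₀ x = dist x y₀ := dist_comm _ _
    simp only [hF]
    rw [h3] at h2
    linarith
  set g : X → ℝ := fun x => sInf (F x '' s) with hg
  have hne : ∀ x, (F x '' s).Nonempty := fun x => ⟨_, Set.mem_image_of_mem _ hy₀⟩
  have hbb : ∀ x, BddBelow (F x '' s) := by
    intro x
    refine ⟨w y₀ - C * dist x y₀ ^ α, ?_⟩
    rintro v ⟨y, hy, rfl⟩
    exact hbdd x y hy
  have hg_le : ∀ x : X, ∀ y ∈ s, g x ≤ F x y := fun x y hy =>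
    csInf_le (hbb x) (Set.mem_image_of_mem _ hy)
  have hg_ge : ∀ x : X, ∀ z ∈ s, w z - C * dist x z ^ α ≤ g x := by
    intro x z hz
    apply le_csInf (hne x)
    rintro v ⟨y, hy, rfl⟩
    have h1 := (abs_le.mp (hw _ hz _ hy)).2
    have h2 : C * dist z y ^ α ≤ C * dist z x ^ α + C * dist x y ^ α :=
      holder_tri' hα0 hα1 hC z y x
    have h3 : dist z x = dist x z := dist_comm _ _
    simp only [hF]
    rw [h3] at h2
    linarith
  have h0 : ∀ x : X, dist x x ^ α = 0 := by
    intro x; rw [dist_self, Real.zero_rpow hα0.ne']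
  have heq : Set.EqOn w g s := by
    intro x hx
    have h1 := hg_le x x hx
    have h2 := hg_ge x x hx
    simp only [hF, h0 x] at h1 h2
    apply le_antisymm <;> [linarith; linarith]
  have hlip : ∀ x₁ x₂ : X, g x₁ ≤ g x₂ + C * dist x₁ x₂ ^ α := by
    intro x₁ x₂
    have key : g x₁ - C * dist x₁ x₂ ^ α ≤ g x₂ := by
      apply le_csInf (hne x₂)
      rintro v ⟨y, hy, rfl⟩
      have h1 := hg_le x₁ y hy
      have h2 : C * dist x₁ y ^ α ≤ C * dist x₁ x₂ ^ α + C * dist x₂ y ^ α :=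
        holder_tri' hα0 hα1 hC x₁ y x₂
      simp only [hF] at h1 ⊢
      linarith
    linarith
  have habs : ∀ x₁ x₂ : X, |g x₁ - g x₂| ≤ C * dist x₁ x₂ ^ α := by
    intro x₁ x₂
    rw [abs_sub_le_iff]
    constructor
    · have := hlip x₁ x₂; linarith
    · have := hlip x₂ x₁; rw [dist_comm x₂ x₁] at this; linarith
  refine ⟨g, ?_, heq⟩
  rw [continuous_iff_continuousAt]
  intro x₀
  have h1 : Filter.Tendsto (fun x => dist x x₀) (nhds x₀) (nhds 0) := by
    have := (continuous_id.dist (continuous_const (y := x₀))).tendsto x₀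
    simpa using this
  have h2 : Filter.Tendsto (fun t : ℝ => t ^ α) (nhds 0) (nhds 0) := by
    have := (Real.continuousAt_rpow_const 0 α (Or.inr hα0.le)).tendsto
    simpa [Real.zero_rpow hα0.ne'] using this
  have hts : Filter.Tendsto (fun x => C * dist x x₀ ^ α) (nhds x₀) (nhds 0) := by
    have := (h2.comp h1).const_mul C
    simpa using this
  have hz : Filter.Tendsto (fun x => g x - g x₀) (nhds x₀) (nhds 0) := by
    apply squeeze_zero_norm _ hts
    intro x
    simpa [Real.norm_eq_abs] using habs x x₀
  have := hz.add (tendsto_const_nhds (x := g x₀))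
  exact (by simpa using this : Filter.Tendsto g (nhds x₀) (nhds (g x₀)))

variable {d : ℕ}

lemma dist_sq_eq' (x y : En (d + 1)) :
    dist x y = Real.sqrt (dist (proj x) (proj y) ^ 2 + (tc x - tc y) ^ 2) := by
  rw [EuclideanSpace.dist_eq, EuclideanSpace.dist_eq]
  congr 1
  rw [Real.sq_sqrt (by positivity)]
  rw [Fin.sum_univ_castSucc]
  simp only [proj, tc, Real.dist_eq]
  congr 1
  rw [sq_abs]

lemma abs_tc_sub_le (x y : En (d + 1)) : |tc x - tc y| ≤ dist x y := by
  rw [dist_sq_eq']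
  rw [show |tc x - tc y| = Real.sqrt ((tc x - tc y) ^ 2) from (Real.sqrt_sq_eq_abs _).symm]
  apply Real.sqrt_le_sqrt
  nlinarith [sq_nonneg (dist (proj x) (proj y))]

lemma dist_proj_le (x y : En (d + 1)) : dist (proj x) (proj y) ≤ dist x y := by
  rw [dist_sq_eq']
  nth_rewrite 1 [show dist (proj x) (proj y) = Real.sqrt (dist (proj x) (proj y) ^ 2) from
    (Real.sqrt_sq dist_nonneg).symm]
  apply Real.sqrt_le_sqrt
  nlinarith [sq_nonneg (tc x - tc y)]

lemma dist_le_proj_add_tc (x y : En (d + 1)) :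
    dist x y ≤ dist (proj x) (proj y) + |tc x - tc y| := by
  rw [dist_sq_eq']
  have h1 : 0 ≤ dist (proj x) (proj y) := dist_nonneg
  have h2 : 0 ≤ |tc x - tc y| := abs_nonneg _
  have h3 : dist (proj x) (proj y) ^ 2 + (tc x - tc y) ^ 2 ≤
      (dist (proj x) (proj y) + |tc x - tc y|) ^ 2 := by
    nlinarith [sq_abs (tc x - tc y)]
  calc Real.sqrt (dist (proj x) (proj y) ^ 2 + (tc x - tc y) ^ 2)
      ≤ Real.sqrt ((dist (proj x) (proj y) + |tc x - tc y|) ^ 2) := Real.sqrt_le_sqrt h3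
    _ = _ := Real.sqrt_sq (by linarith)

lemma tc_continuous : Continuous (tc : En (d + 1) → ℝ) := by
  apply LipschitzWith.continuous (K := 1)
  apply LipschitzWith.of_dist_le_mul
  intro x y
  rw [Real.dist_eq]
  simpa using abs_tc_sub_le x y

lemma proj_continuous : Continuous (proj : En (d + 1) → En d) := by
  apply LipschitzWith.continuous (K := 1)
  apply LipschitzWith.of_dist_le_mul
  intro x y
  simpa using dist_proj_le x y

lemma proj_zero : proj (0 : En (d + 1)) = 0 := by
  ext i; simp [proj]

lemma tc_zero : tc (0 : En (d + 1)) = 0 := by simp [tc]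

lemma proj_sub_single (x : En (d + 1)) (c : ℝ) :
    proj (x - c • EuclideanSpace.single (Fin.last d) (1 : ℝ)) = proj x := by
  ext i
  simp [proj, EuclideanSpace.single_apply, (Fin.castSucc_lt_last i).ne]

lemma tc_sub_single (x : En (d + 1)) (c : ℝ) :
    tc (x - c • EuclideanSpace.single (Fin.last d) (1 : ℝ)) = tc x - c := by
  simp [tc, EuclideanSpace.single_apply]

lemma dist_sub_single (x : En (d + 1)) (c : ℝ) :
    dist x (x - c • EuclideanSpace.single (Fin.last d) (1 : ℝ)) = |c| := by
  rw [dist_eq_norm, sub_sub_cancel, norm_smul, EuclideanSpace.norm_single]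
  simp

lemma proj_single_smul (c : ℝ) :
    proj (c • EuclideanSpace.single (Fin.last d) (1 : ℝ)) = (0 : En d) := by
  ext i
  simp [proj, EuclideanSpace.single_apply, (Fin.castSucc_lt_last i).ne]

lemma tc_single_smul (c : ℝ) :
    tc (c • EuclideanSpace.single (Fin.last d) (1 : ℝ)) = c := by
  simp [tc, EuclideanSpace.single_apply]

lemma G_mono {r s : ℝ} (h : r ≤ s) : G d r ⊆ G d s := by
  rintro x ⟨h1, h2, h3⟩
  exact ⟨lt_of_lt_of_le h1 h, h2, lt_of_lt_of_le h3 h⟩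

lemma G_subset_closedBall {r : ℝ} (hr : r ≤ 1) : G d r ⊆ Metric.closedBall 0 2 := by
  rintro x ⟨h1, h2, h3⟩
  rw [Metric.mem_closedBall]
  have h := dist_le_proj_add_tc x 0
  rw [proj_zero, tc_zero, sub_zero, abs_of_pos h2] at h
  simp only [dist_zero_right] at h ⊢
  linarith

lemma ball_subset_G1 {r : ℝ} (hr : r < 1) {x : En (d + 1)} (hx : x ∈ G d r)
    (ht : tc x ≤ min (1 - r) (1 / 2)) : Metric.ball x (tc x / 2) ⊆ G d 1 := by
  obtain ⟨hx1, hx2, hx3⟩ := hx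
  obtain ⟨ht1, ht2⟩ := le_min_iff.mp ht
  intro y hy
  rw [Metric.mem_ball] at hy
  have hp : dist (proj y) (proj x) ≤ dist y x := dist_proj_le y x
  have htt : |tc y - tc x| ≤ dist y x := abs_tc_sub_le y x
  obtain ⟨ha1, ha2⟩ := abs_sub_lt_iff.mp (lt_of_le_of_lt htt hy)
  have hnp : ‖proj y‖ ≤ dist (proj y) (proj x) + ‖proj x‖ := by
    have := dist_triangle (proj y) (proj x) 0
    rwa [dist_zero_right, dist_zero_right] at this
  refine ⟨by linarith, by linarith, by linarith⟩

lemma G_nonempty {r : ℝ} (hr : 0 < r) :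
    ((r / 2) • EuclideanSpace.single (Fin.last d) (1 : ℝ)) ∈ G d r := by
  refine ⟨?_, ?_, ?_⟩
  · rw [proj_single_smul, norm_zero]; exact hr
  · rw [tc_single_smul]; linarith
  · rw [tc_single_smul]; linarith

end AuxLemmas

/-- **From interior estimates to global Hölder continuity** (Lemma 4.1). -/
theorem global_holder_from_interior
    {d : ℕ} (A α : ℝ) (hA : 0 < A) (hα : α ∈ Ioo (0 : ℝ) 1)
    (w : En (d + 1) → ℝ) (w₀ : En d → ℝ)
    (hwloc : ∀ K : Set (En (d + 1)), K ⊆ G d 1 → IsCompact K → IsHolderOn α K w)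
    (hw₀ : IsHolderOn α (Metric.ball (0 : En d) 1) w₀)
    (hw₀b : BoundedOn (Metric.ball (0 : En d) 1) w₀)
    (h1 : ∀ x ∈ G d 1, Metric.ball x (tc x / 2) ⊆ G d 1 →
      |w x - w₀ (proj x)| ≤ A * tc x ^ α)
    (h2 : ∀ x ∈ G d 1, Metric.ball x (tc x / 2) ⊆ G d 1 →
      ∀ y ∈ Metric.ball x (tc x / 2), ∀ z ∈ Metric.ball x (tc x / 2),
        |w y - w z| ≤ A * dist y z ^ α) :
    (∀ r ∈ Ioo (0 : ℝ) 1, IsHolderOn α (G d r) w ∧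
      ∃ g : En (d + 1) → ℝ, ContinuousOn g (closure (G d r)) ∧ EqOn w g (G d r)) ∧
    holderNorm α (G d (1 / 2)) w ≤
      5 * A + holderNorm α (Metric.ball (0 : En d) 1) w₀ := by
  obtain ⟨hα0, hα1⟩ := hα
  set H₀ := holderSemi α (Metric.ball (0 : En d) 1) w₀ with hH₀def
  set S₀ := supNorm (Metric.ball (0 : En d) 1) w₀ with hS₀def
  obtain ⟨C₀, hC₀⟩ := hw₀
  obtain ⟨M₀, hM₀⟩ := hw₀b
  have hball0 : (0 : En d) ∈ Metric.ball (0 : En d) 1 := Metric.mem_ball_self one_pos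
  have hM₀0 : 0 ≤ M₀ := le_trans (abs_nonneg _) (hM₀ 0 hball0)
  have hratio_bdd : BddAbove ((fun p : En d × En d => |w₀ p.1 - w₀ p.2| / dist p.1 p.2 ^ α) ''
      (Metric.ball (0 : En d) 1 ×ˢ Metric.ball (0 : En d) 1)) := by
    refine ⟨max C₀ 0, ?_⟩
    rintro v ⟨⟨a, b⟩, ⟨ha, hb⟩, rfl⟩
    rcases eq_or_ne a b with rfl | hab
    · simpa using le_max_right C₀ 0
    · have hd : 0 < dist a b := dist_pos.mpr hab
      have hdα : 0 < dist a b ^ α := Real.rpow_pos_of_pos hd α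
      rw [div_le_iff₀ hdα]
      calc |w₀ a - w₀ b| ≤ C₀ * dist a b ^ α := hC₀ a ha b hb
        _ ≤ max C₀ 0 * dist a b ^ α :=
            mul_le_mul_of_nonneg_right (le_max_left _ _) hdα.le
  have hH₀0 : 0 ≤ H₀ := by
    apply le_csSup hratio_bdd
    exact ⟨(0, 0), ⟨hball0, hball0⟩, by simp⟩
  have hH₀ : ∀ a ∈ Metric.ball (0 : En d) 1, ∀ b ∈ Metric.ball (0 : En d) 1,
      |w₀ a - w₀ b| ≤ H₀ * dist a b ^ α := by
    intro a ha b hb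
    rcases eq_or_ne a b with rfl | hab
    · simp [dist_self, Real.zero_rpow hα0.ne']
    · have hd : 0 < dist a b := dist_pos.mpr hab
      have hdα : 0 < dist a b ^ α := Real.rpow_pos_of_pos hd α
      rw [← div_le_iff₀ hdα]
      exact le_csSup hratio_bdd ⟨(a, b), ⟨ha, hb⟩, rfl⟩
  have hS₀bdd : BddAbove ((fun x => |w₀ x|) '' Metric.ball (0 : En d) 1) := by
    refine ⟨M₀, ?_⟩
    rintro v ⟨y, hy, rfl⟩
    exact hM₀ y hy
  have hS₀ : ∀ y ∈ Metric.ball (0 : En d) 1, |w₀ y| ≤ S₀ := fun y hy =>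
    le_csSup hS₀bdd ⟨y, hy, rfl⟩
  have hS₀0 : 0 ≤ S₀ := le_trans (abs_nonneg _) (hS₀ 0 hball0)
  have hprojball : ∀ {s : ℝ}, s ≤ 1 → ∀ x ∈ G d s, proj x ∈ Metric.ball (0 : En d) 1 := by
    intro s hs x hx
    rw [Metric.mem_ball, dist_zero_right]
    exact lt_of_lt_of_le hx.1 hs
  -- the key two-point estimate near the boundary
  have key : ∀ y ∈ G d 1, ∀ z ∈ G d 1, Metric.ball y (tc y / 2) ⊆ G d 1 →
      Metric.ball z (tc z / 2) ⊆ G d 1 → tc z ≤ tc y →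
      |w y - w z| ≤ (4 * A + H₀) * dist y z ^ α := by
    intro y hy z hz hby hbz hzy
    have hdα : (0:ℝ) ≤ dist y z ^ α := Real.rpow_nonneg dist_nonneg α
    by_cases hcase : dist y z < tc y / 2
    · have hmem : z ∈ Metric.ball y (tc y / 2) := by
        rw [Metric.mem_ball, dist_comm]; exact hcase
      have h := h2 y hy hby y (Metric.mem_ball_self (by have := hy.2.1; linarith)) z hmem
      calc |w y - w z| ≤ A * dist y z ^ α := h
        _ ≤ (4 * A + H₀) * dist y z ^ α :=
            mul_le_mul_of_nonneg_right (by linarith) hdα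
    · push_neg at hcase
      have hd0 : (0:ℝ) ≤ dist y z := dist_nonneg
      have h2α : (2:ℝ) ^ α ≤ 2 := by
        calc (2:ℝ) ^ α ≤ (2:ℝ) ^ (1:ℝ) := Real.rpow_le_rpow_of_exponent_le one_le_two hα1.le
          _ = 2 := Real.rpow_one 2
      have hty : tc y ^ α ≤ 2 * dist y z ^ α := by
        calc tc y ^ α ≤ (2 * dist y z) ^ α :=
              Real.rpow_le_rpow hy.2.1.le (by linarith) hα0.le
          _ = 2 ^ α * dist y z ^ α := Real.mul_rpow (by norm_num) hd0
          _ ≤ 2 * dist y z ^ α := mul_le_mul_of_nonneg_right h2α hdα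
      have htz : tc z ^ α ≤ 2 * dist y z ^ α := by
        calc tc z ^ α ≤ (2 * dist y z) ^ α :=
              Real.rpow_le_rpow hz.2.1.le (by linarith) hα0.le
          _ = 2 ^ α * dist y z ^ α := Real.mul_rpow (by norm_num) hd0
          _ ≤ 2 * dist y z ^ α := mul_le_mul_of_nonneg_right h2α hdα
      have h1y := h1 y hy hby
      have h1z := h1 z hz hbz
      have hw0 : |w₀ (proj y) - w₀ (proj z)| ≤ H₀ * dist y z ^ α := by
        calc |w₀ (proj y) - w₀ (proj z)| ≤ H₀ * dist (proj y) (proj z) ^ α :=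
              hH₀ _ (hprojball le_rfl y hy) _ (hprojball le_rfl z hz)
          _ ≤ H₀ * dist y z ^ α := by
              apply mul_le_mul_of_nonneg_left _ hH₀0
              exact Real.rpow_le_rpow dist_nonneg (dist_proj_le y z) hα0.le
      have htri : |w y - w z| ≤
          |w y - w₀ (proj y)| + |w₀ (proj y) - w₀ (proj z)| + |w z - w₀ (proj z)| := by
        have t1 : |w y - w z| ≤ |w y - w₀ (proj y)| + |w₀ (proj y) - w z| :=
          abs_sub_le _ _ _
        have t2 : |w₀ (proj y) - w z| ≤ |w₀ (proj y) - w₀ (proj z)| + |w₀ (proj z) - w z| :=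
          abs_sub_le _ _ _
        rw [abs_sub_comm (w₀ (proj z)) (w z)] at t2
        linarith
      have hAy : A * tc y ^ α ≤ A * (2 * dist y z ^ α) := mul_le_mul_of_nonneg_left hty hA.le
      have hAz : A * tc z ^ α ≤ A * (2 * dist y z ^ α) := mul_le_mul_of_nonneg_left htz hA.le
      nlinarith [h1y, h1z, hw0, htri, hAy, hAz]
  have key' : ∀ y ∈ G d 1, ∀ z ∈ G d 1, Metric.ball y (tc y / 2) ⊆ G d 1 →
      Metric.ball z (tc z / 2) ⊆ G d 1 →
      |w y - w z| ≤ (4 * A + H₀) * dist y z ^ α := by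
    intro y hy z hz hby hbz
    rcases le_total (tc z) (tc y) with h | h
    · exact key y hy z hz hby hbz h
    · rw [abs_sub_comm, dist_comm]
      exact key z hz y hy hbz hby h
  constructor
  · -- Part 1 : for each r ∈ (0,1)
    rintro r ⟨hr0, hr1⟩
    set δ : ℝ := min (1 - r) (1 / 2) with hδdef
    have hδ0 : 0 < δ := lt_min (by linarith) (by norm_num)
    have hδ1 : δ ≤ 1 / 2 := min_le_right _ _
    set K : Set (En (d + 1)) := closure (G d r) ∩ {x | δ / 2 ≤ tc x} with hKdef
    have hclos : closure (G d r) ⊆ {x : En (d + 1) | ‖proj x‖ ≤ r ∧ 0 ≤ tc x ∧ tc x ≤ r} := by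
      apply closure_minimal
      · rintro x ⟨a, b, c⟩; exact ⟨a.le, b.le, c.le⟩
      · have hEq : {x : En (d + 1) | ‖proj x‖ ≤ r ∧ 0 ≤ tc x ∧ tc x ≤ r} =
            {x : En (d + 1) | ‖proj x‖ ≤ r} ∩
              ({x : En (d + 1) | 0 ≤ tc x} ∩ {x : En (d + 1) | tc x ≤ r}) := rfl
        rw [hEq]
        exact (isClosed_le proj_continuous.norm continuous_const).inter
          ((isClosed_le continuous_const tc_continuous).inter
            (isClosed_le tc_continuous continuous_const))
    have hKcl : IsClosed K := isClosed_closure.inter (isClosed_le continuous_const tc_continuous)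
    have hKb : Bornology.IsBounded K := by
      apply Metric.isBounded_closedBall.subset
      intro x hx
      exact (closure_minimal (G_subset_closedBall hr1.le) Metric.isClosed_closedBall) hx.1
    have hKcpt : IsCompact K := Metric.isCompact_of_isClosed_isBounded hKcl hKb
    have hK1 : K ⊆ G d 1 := by
      rintro x ⟨hxc, hxt⟩
      obtain ⟨a, b, c⟩ := hclos hxc
      exact ⟨lt_of_le_of_lt a hr1, lt_of_lt_of_le (half_pos hδ0) hxt, lt_of_le_of_lt c hr1⟩
    obtain ⟨CK, hCK⟩ := hwloc K hK1 hKcpt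
    set CK' : ℝ := max CK 0 with hCK'def
    have hCK'0 : 0 ≤ CK' := le_max_right _ _
    have hCK' : ∀ x ∈ K, ∀ y ∈ K, |w x - w y| ≤ CK' * dist x y ^ α := by
      intro x hx y hy
      refine (hCK x hx y hy).trans ?_
      exact mul_le_mul_of_nonneg_right (le_max_left _ _) (Real.rpow_nonneg dist_nonneg α)
    have hsuplow : ∀ x ∈ G d r, tc x ≤ δ → |w x| ≤ A + M₀ := by
      intro x hx ht
      have hb := ball_subset_G1 hr1 hx (by rw [← hδdef]; exact ht)
      have h := h1 x (G_mono hr1.le hx) hb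
      have hwx : |w x| ≤ |w x - w₀ (proj x)| + |w₀ (proj x)| := by
        calc |w x| = |(w x - w₀ (proj x)) + w₀ (proj x)| := by rw [sub_add_cancel]
          _ ≤ _ := abs_add_le _ _
      have htα : tc x ^ α ≤ 1 :=
        Real.rpow_le_one hx.2.1.le (by linarith) hα0.le
      have hwp := hM₀ (proj x) (hprojball hr1.le x hx)
      nlinarith [h, hwx, hwp, hA]
    have hsup_all : ∀ x ∈ G d r, |w x| ≤ A + M₀ + CK' := by
      intro x hx
      by_cases ht : tc x ≤ δ
      · linarith [hsuplow x hx ht]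
      · push_neg at ht
        have hδr : δ < r := lt_trans ht hx.2.2
        set x' := x - (tc x - δ / 2) • EuclideanSpace.single (Fin.last d) (1 : ℝ) with hx'def
        have hpx' : proj x' = proj x := proj_sub_single x _
        have htx' : tc x' = δ / 2 := by rw [hx'def, tc_sub_single]; ring
        have hx'G : x' ∈ G d r := by
          refine ⟨?_, ?_, ?_⟩
          · rw [hpx']; exact hx.1
          · rw [htx']; linarith
          · rw [htx']; linarith
        have hxK : x ∈ K := ⟨subset_closure hx, by simp only [Set.mem_setOf_eq]; linarith⟩
        have hx'K : x' ∈ K := ⟨subset_closure hx'G, htx'.ge⟩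
        have hdist : dist x x' = tc x - δ / 2 := by
          rw [hx'def, dist_sub_single, abs_of_pos (by linarith)]
        have hdist1 : dist x x' ≤ 1 := by rw [hdist]; linarith [hx.2.2]
        have hwd : |w x - w x'| ≤ CK' := by
          refine (hCK' x hxK x' hx'K).trans ?_
          calc CK' * dist x x' ^ α ≤ CK' * 1 := by
                apply mul_le_mul_of_nonneg_left _ hCK'0
                exact Real.rpow_le_one dist_nonneg hdist1 hα0.le
            _ = CK' := mul_one _
        have hwx' : |w x'| ≤ A + M₀ := hsuplow x' hx'G (by rw [htx']; linarith)
        have : |w x| ≤ |w x - w x'| + |w x'| := by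
          calc |w x| = |(w x - w x') + w x'| := by rw [sub_add_cancel]
            _ ≤ _ := abs_add_le _ _
        linarith
    set M : ℝ := A + M₀ + CK' with hMdef
    have hM0 : 0 ≤ M := by rw [hMdef]; linarith
    have hδα : 0 < (δ / 2) ^ α := Real.rpow_pos_of_pos (by linarith) α
    set Cmix : ℝ := 2 * M / (δ / 2) ^ α with hCmixdef
    have hCmix0 : 0 ≤ Cmix := div_nonneg (by linarith) hδα.le
    set Ct : ℝ := (4 * A + H₀) + CK' + Cmix with hCtdef
    have hCt0 : 0 ≤ Ct := by rw [hCtdef]; positivity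
    have hpair0 : ∀ y ∈ G d r, ∀ z ∈ G d r, tc z ≤ tc y →
        |w y - w z| ≤ Ct * dist y z ^ α := by
      intro y hy z hz hzy
      have hdα : (0:ℝ) ≤ dist y z ^ α := Real.rpow_nonneg dist_nonneg α
      have hrest : 0 ≤ (CK' + Cmix) * dist y z ^ α := mul_nonneg (by linarith) hdα
      by_cases hty : tc y ≤ δ
      · have hby := ball_subset_G1 hr1 hy (by rw [← hδdef]; exact hty)
        have hbz := ball_subset_G1 hr1 hz (by rw [← hδdef]; exact hzy.trans hty)
        have h := key y (G_mono hr1.le hy) z (G_mono hr1.le hz) hby hbz hzy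
        have : Ct * dist y z ^ α = (4 * A + H₀) * dist y z ^ α + (CK' + Cmix) * dist y z ^ α := by
          rw [hCtdef]; ring
        linarith
      · push_neg at hty
        by_cases htz : δ / 2 ≤ tc z
        · have hyK : y ∈ K := ⟨subset_closure hy, by simp only [Set.mem_setOf_eq]; linarith⟩
          have hzK : z ∈ K := ⟨subset_closure hz, htz⟩
          have h := hCK' y hyK z hzK
          have hrest2 : 0 ≤ ((4 * A + H₀) + Cmix) * dist y z ^ α :=
            mul_nonneg (by linarith) hdα
          have : Ct * dist y z ^ α = CK' * dist y z ^ α + ((4 * A + H₀) + Cmix) * dist y z ^ α := by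
            rw [hCtdef]; ring
          linarith
        · push_neg at htz
          have htc := abs_tc_sub_le y z
          have hle := le_abs_self (tc y - tc z)
          have hdist : δ / 2 < dist y z := by linarith
          have h2M : 2 * M ≤ Cmix * dist y z ^ α := by
            have hh1 : (δ / 2) ^ α ≤ dist y z ^ α :=
              Real.rpow_le_rpow (by linarith) hdist.le hα0.le
            have hh2 : Cmix * (δ / 2) ^ α ≤ Cmix * dist y z ^ α :=
              mul_le_mul_of_nonneg_left hh1 hCmix0
            have hh3 : Cmix * (δ / 2) ^ α = 2 * M := by
              rw [hCmixdef, div_mul_cancel₀ _ hδα.ne']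
            linarith
          have habs : |w y - w z| ≤ |w y| + |w z| := by
            rw [sub_eq_add_neg]
            refine (abs_add_le _ _).trans ?_
            rw [abs_neg]
          have hMy := hsup_all y hy
          have hMz := hsup_all z hz
          have hrest2 : 0 ≤ ((4 * A + H₀) + CK') * dist y z ^ α :=
            mul_nonneg (by linarith) hdα
          have : Ct * dist y z ^ α = Cmix * dist y z ^ α + ((4 * A + H₀) + CK') * dist y z ^ α := by
            rw [hCtdef]; ring
          rw [hMdef] at h2M
          linarith
    have hpair : ∀ y ∈ G d r, ∀ z ∈ G d r, |w y - w z| ≤ Ct * dist y z ^ α := by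
      intro y hy z hz
      rcases le_total (tc z) (tc y) with h | h
      · exact hpair0 y hy z hz h
      · rw [abs_sub_comm, dist_comm]
        exact hpair0 z hz y hy h
    refine ⟨⟨Ct, hpair⟩, ?_⟩
    obtain ⟨g, hgc, hgeq⟩ := holder_extend' hα0 hα1.le hCt0 ⟨_, G_nonempty hr0⟩ hpair
    exact ⟨g, hgc.continuousOn, hgeq⟩
  · -- Part 2 : the norm bound on G_{1/2}
    have hb12 : ∀ x ∈ G d (1 / 2 : ℝ), Metric.ball x (tc x / 2) ⊆ G d 1 := by
      intro x hx
      apply ball_subset_G1 (by norm_num) hx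
      have h := hx.2.2
      apply le_min <;> [linarith; linarith]
    have h12sub : G d (1 / 2 : ℝ) ⊆ G d 1 := G_mono (by norm_num)
    have hsup : supNorm (G d (1 / 2 : ℝ)) w ≤ A + S₀ := by
      apply Real.sSup_le
      · rintro v ⟨x, hx, rfl⟩
        have hb := hb12 x hx
        have h := h1 x (h12sub hx) hb
        have hwx : |w x| ≤ |w x - w₀ (proj x)| + |w₀ (proj x)| := by
          calc |w x| = |(w x - w₀ (proj x)) + w₀ (proj x)| := by rw [sub_add_cancel]
            _ ≤ _ := abs_add_le _ _
        have htα : tc x ^ α ≤ 1 :=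
          Real.rpow_le_one hx.2.1.le (by have := hx.2.2; linarith) hα0.le
        have hwp := hS₀ (proj x) (hprojball (by norm_num) x hx)
        nlinarith [h, hwx, hwp, hA]
      · linarith
    have hsemi : holderSemi α (G d (1 / 2 : ℝ)) w ≤ 4 * A + H₀ := by
      apply Real.sSup_le
      · rintro v ⟨⟨y, z⟩, ⟨hy, hz⟩, rfl⟩
        rcases eq_or_ne y z with rfl | hne
        · simp only [sub_self, abs_zero, zero_div]
          linarith
        · have hd : 0 < dist y z := dist_pos.mpr hne
          have hdα : 0 < dist y z ^ α := Real.rpow_pos_of_pos hd α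
          rw [div_le_iff₀ hdα]
          exact key' y (h12sub hy) z (h12sub hz) (hb12 y hy) (hb12 z hz)
      · linarith
    have hEq1 : holderNorm α (G d (1 / 2 : ℝ)) w =
        supNorm (G d (1 / 2 : ℝ)) w + holderSemi α (G d (1 / 2 : ℝ)) w := rfl
    have hEq2 : holderNorm α (Metric.ball (0 : En d) 1) w₀ = S₀ + H₀ := rfl
    rw [hEq1, hEq2]
    linarith
end
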